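/- arXiv:nlin/0312002 — 5 statements merged into one kernel-verified Lean document; each statement's English description precedes it below -/
import Mathlib

section
/- Every entire twisted doubly periodic matrix-valued function is a constant scalar multiple of the identity: if X : ℂ → Matrix (Fin 2) (Fin 2) ℂ is holomorphic on all of ℂ and satisfies X(z + 2ω_a) = σ_a · X(z) · σ_a for a = 1, 2, 3 and all z ∈ ℂ, then there exists c ∈ ℂ such that X(z) = c • 1 for all z ∈ ℂ. -/
noncomputable section

open Filter Topology

attribute [local instance] Matrix.normedAddCommGroup Matrix.normedSpace

/-- The Pauli matrix σ₁. -/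
def σ1 : Matrix (Fin 2) (Fin 2) ℂ := !![0, 1; 1, 0]

/-- The Pauli matrix σ₂. -/
def σ2 : Matrix (Fin 2) (Fin 2) ℂ := !![0, -Complex.I; Complex.I, 0]

/-- The Pauli matrix σ₃. -/
def σ3 : Matrix (Fin 2) (Fin 2) ℂ := !![1, 0; 0, -1]

/-- The period lattice Λ = 2ω₁ℤ + 2ω₃ℤ. -/
def lattice (ω₁ ω₃ : ℂ) : Set ℂ :=
  {z | ∃ m n : ℤ, z = 2 * (m : ℂ) * ω₁ + 2 * (n : ℂ) * ω₃}

/-- Twisted double periodicity on a set `S`: `X (z + 2ω_a) = σ_a * X z * σ_a` for `a = 1,2,3`,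
with `ω₂ = -ω₁ - ω₃`. -/
def TwistedPeriodicOn (ω₁ ω₃ : ℂ) (S : Set ℂ)
    (X : ℂ → Matrix (Fin 2) (Fin 2) ℂ) : Prop :=
  (∀ z ∈ S, X (z + 2 * ω₁) = σ1 * X z * σ1) ∧
  (∀ z ∈ S, X (z + 2 * (-ω₁ - ω₃)) = σ2 * X z * σ2) ∧
  (∀ z ∈ S, X (z + 2 * ω₃) = σ3 * X z * σ3)

/-- The vacuum point `W₀`: functions holomorphic on `ℂ ∖ Λ` and twisted doubly periodic there. -/
def W0 (ω₁ ω₃ : ℂ) : Set (ℂ → Matrix (Fin 2) (Fin 2) ℂ) :=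
  {X | DifferentiableOn ℂ X (lattice ω₁ ω₃)ᶜ ∧
       TwistedPeriodicOn ω₁ ω₃ (lattice ω₁ ω₃)ᶜ X}

/-- every entire twisted doubly periodic matrix-valued function is a constant
scalar multiple of the identity. -/
theorem entire_twisted_periodic_eq_scalar (ω₁ ω₃ : ℂ)
    (hind : LinearIndependent ℝ ![ω₁, ω₃])
    (X : ℂ → Matrix (Fin 2) (Fin 2) ℂ) (hX : Differentiable ℂ X)
    (h1 : ∀ z : ℂ, X (z + 2 * ω₁) = σ1 * X z * σ1)
    (h2 : ∀ z : ℂ, X (z + 2 * (-ω₁ - ω₃)) = σ2 * X z * σ2)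
    (h3 : ∀ z : ℂ, X (z + 2 * ω₃) = σ3 * X z * σ3) :
    ∃ c : ℂ, ∀ z : ℂ, X z = c • (1 : Matrix (Fin 2) (Fin 2) ℂ) := by
  have hσ1 : σ1 * σ1 = 1 := by
    simp [σ1, Matrix.mul_fin_two, Matrix.one_fin_two]
  have hσ3 : σ3 * σ3 = 1 := by
    simp [σ3, Matrix.mul_fin_two, Matrix.one_fin_two]
  -- true periodicity with periods 4ω₁, 4ω₃
  have hP1 : Function.Periodic X (4 * ω₁) := by
    intro z
    have e : z + 4 * ω₁ = z + 2 * ω₁ + 2 * ω₁ := by ring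
    rw [e, h1, h1, show σ1 * (σ1 * X z * σ1) * σ1 = (σ1 * σ1) * X z * (σ1 * σ1) by
      noncomm_ring, hσ1, one_mul, mul_one]
  have hP3 : Function.Periodic X (4 * ω₃) := by
    intro z
    have e : z + 4 * ω₃ = z + 2 * ω₃ + 2 * ω₃ := by ring
    rw [e, h3, h3, show σ3 * (σ3 * X z * σ3) * σ3 = (σ3 * σ3) * X z * (σ3 * σ3) by
      noncomm_ring, hσ3, one_mul, mul_one]
  -- the fundamental compact set
  set K : Set ℂ := (fun p : ℝ × ℝ => p.1 • ω₁ + p.2 • ω₃) ''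
    (Set.Icc (0 : ℝ) 4 ×ˢ Set.Icc (0 : ℝ) 4) with hKdef
  have hKcpt : IsCompact K := by
    apply (isCompact_Icc.prod isCompact_Icc).image
    fun_prop
  obtain ⟨C, hC⟩ := hKcpt.exists_bound_of_continuousOn hX.continuous.continuousOn
  -- basis of ℂ over ℝ
  have hcard : Fintype.card (Fin 2) = Module.finrank ℝ ℂ := by
    simp [Complex.finrank_real_complex]
  let b : Module.Basis (Fin 2) ℝ ℂ := basisOfLinearIndependentOfCardEqFinrank hind hcard
  have hb : ⇑b = ![ω₁, ω₃] := coe_basisOfLinearIndependentOfCardEqFinrank hind hcard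
  -- every point is a lattice translate of a point of K
  have key : ∀ z : ℂ, ∃ w ∈ K, X z = X w := by
    intro z
    set a : ℝ := b.repr z 0 with ha
    set c : ℝ := b.repr z 1 with hc
    have hz : z = a • ω₁ + c • ω₃ := by
      conv_lhs => rw [← b.sum_repr z]
      rw [Fin.sum_univ_two, hb]
      simp [ha, hc]
    set m : ℤ := ⌊a / 4⌋ with hm
    set n : ℤ := ⌊c / 4⌋ with hn
    set r : ℝ := a - 4 * m with hr
    set s : ℝ := c - 4 * n with hs
    have hr0 : 0 ≤ r := by
      have := Int.floor_le (a / 4)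
      simp only [hr]
      nlinarith
    have hr4 : r ≤ 4 := by
      have := Int.lt_floor_add_one (a / 4)
      simp only [hr]
      nlinarith
    have hs0 : 0 ≤ s := by
      have := Int.floor_le (c / 4)
      simp only [hs]
      nlinarith
    have hs4 : s ≤ 4 := by
      have := Int.lt_floor_add_one (c / 4)
      simp only [hs]
      nlinarith
    refine ⟨r • ω₁ + s • ω₃, ⟨(r, s), ⟨⟨hr0, hr4⟩, hs0, hs4⟩, rfl⟩, ?_⟩
    have hzw : z = (r • ω₁ + s • ω₃) + (m : ℂ) * (4 * ω₁) + (n : ℂ) * (4 * ω₃) := by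
      rw [hz]
      simp only [Complex.real_smul, hr, hs]
      push_cast
      ring
    rw [hzw]
    rw [(hP3.int_mul n) _, (hP1.int_mul m) _]
  -- each entry is a bounded entire function, hence constant
  have hconst : ∀ z : ℂ, X z = X 0 := by
    intro z
    ext i j
    have hf : Differentiable ℂ (fun z => X z i j) := by
      exact (ContinuousLinearMap.proj (R := ℂ) (φ := fun _ : Fin 2 => ℂ) j).differentiable.comp
        ((ContinuousLinearMap.proj (R := ℂ) (φ := fun _ : Fin 2 => Fin 2 → ℂ)
          i).differentiable.comp hX)
    have hbdd : Bornology.IsBounded (Set.range fun z => X z i j) := by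
      rw [Metric.isBounded_iff_subset_closedBall 0]
      refine ⟨C, ?_⟩
      rintro y ⟨z, rfl⟩
      obtain ⟨w, hwK, hw⟩ := key z
      have h1 : ‖X z i j‖ ≤ ‖X z‖ := Matrix.norm_entry_le_entrywise_sup_norm (X z)
      have h2 : ‖X z‖ ≤ C := hw ▸ hC w hwK
      simp only [Metric.mem_closedBall, dist_zero_right]
      exact h1.trans h2
    exact hf.apply_eq_apply_of_bounded hbdd z 0
  -- the constant matrix commutes appropriately with σ1 and σ3, hence is scalar
  set A : Matrix (Fin 2) (Fin 2) ℂ := X 0 with hA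
  have e1 : A = σ1 * A * σ1 := by rw [hA, ← h1 0]; exact (hconst _).symm
  have e3 : A = σ3 * A * σ3 := by rw [hA, ← h3 0]; exact (hconst _).symm
  have h01 : A 0 1 = 0 := by
    have := congrArg (fun M => M 0 1) e3
    simp [σ3, Matrix.mul_apply, Matrix.vecMul, dotProduct, Matrix.vecHead, Matrix.vecTail, Fin.sum_univ_two] at this
    linear_combination this / 2
  have h10 : A 1 0 = 0 := by
    have := congrArg (fun M => M 1 0) e3
    simp [σ3, Matrix.mul_apply, Matrix.vecMul, dotProduct, Matrix.vecHead, Matrix.vecTail, Fin.sum_univ_two] at this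
    linear_combination this / 2
  have hdiag : A 0 0 = A 1 1 := by
    have := congrArg (fun M => M 0 0) e1
    simpa [σ1, Matrix.mul_apply, Matrix.vecMul, dotProduct, Matrix.vecHead, Matrix.vecTail, Fin.sum_univ_two] using this
  refine ⟨A 0 0, fun z => ?_⟩
  rw [hconst z]
  ext i j
  fin_cases i <;> fin_cases j <;>
    simp [Matrix.one_apply, h01, h10, ← hdiag]
end
end

section
/- (Lemma 1, part (i): Ker(W₀ → V/V₊) = {0}.) If X ∈ W₀, i.e. X : ℂ → Matrix (Fin 2) (Fin 2) ℂ is holomorphic on ℂ ∖ Λ and twisted doubly periodic there, and X(z) → 0 as z → 0 along ℂ ∖ Λ, then X(z) = 0 for all z ∈ ℂ ∖ Λ. -/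
noncomputable section

open Filter Topology

attribute [local instance] Matrix.normedAddCommGroup Matrix.normedSpace

namespace W0KerTrivialAux

instance : CompleteSpace (Matrix (Fin 2) (Fin 2) ℂ) :=
  inferInstanceAs (CompleteSpace (Fin 2 → Fin 2 → ℂ))

lemma sq1 : σ1 * σ1 = 1 := by
  rw [σ1, Matrix.one_fin_two]; norm_num [Matrix.mul_fin_two]

lemma sq3 : σ3 * σ3 = 1 := by
  rw [σ3, Matrix.one_fin_two]; norm_num [Matrix.mul_fin_two]

lemma conj1_eq (M : Matrix (Fin 2) (Fin 2) ℂ) :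
    σ1 * M * σ1 = !![M 1 1, M 1 0; M 0 1, M 0 0] := by
  ext i j; fin_cases i <;> fin_cases j <;>
    simp [σ1, Matrix.mul_apply, Matrix.vecMul, dotProduct, Fin.sum_univ_two]

lemma conj3_eq (M : Matrix (Fin 2) (Fin 2) ℂ) :
    σ3 * M * σ3 = !![M 0 0, -M 0 1; -M 1 0, M 1 1] := by
  ext i j; fin_cases i <;> fin_cases j <;>
    simp [σ3, Matrix.mul_apply, Matrix.vecMul, dotProduct, Fin.sum_univ_two]

lemma conj1_le (M : Matrix (Fin 2) (Fin 2) ℂ) : ‖σ1 * M * σ1‖ ≤ ‖M‖ := by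
  rw [conj1_eq, Matrix.norm_le_iff (norm_nonneg M)]
  intro i j
  fin_cases i <;> fin_cases j <;>
    simpa using Matrix.norm_entry_le_entrywise_sup_norm M

lemma conj3_le (M : Matrix (Fin 2) (Fin 2) ℂ) : ‖σ3 * M * σ3‖ ≤ ‖M‖ := by
  rw [conj3_eq, Matrix.norm_le_iff (norm_nonneg M)]
  intro i j
  fin_cases i <;> fin_cases j <;>
    simpa using Matrix.norm_entry_le_entrywise_sup_norm M

lemma conj1_norm (M : Matrix (Fin 2) (Fin 2) ℂ) : ‖σ1 * M * σ1‖ = ‖M‖ := by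
  refine le_antisymm (conj1_le M) ?_
  have h := conj1_le (σ1 * M * σ1)
  have e : σ1 * (σ1 * M * σ1) * σ1 = M := by
    have : σ1 * (σ1 * M * σ1) * σ1 = (σ1 * σ1) * M * (σ1 * σ1) := by
      noncomm_ring
    rw [this, sq1, one_mul, mul_one]
  rwa [e] at h

lemma conj3_norm (M : Matrix (Fin 2) (Fin 2) ℂ) : ‖σ3 * M * σ3‖ = ‖M‖ := by
  refine le_antisymm (conj3_le M) ?_
  have h := conj3_le (σ3 * M * σ3)
  have e : σ3 * (σ3 * M * σ3) * σ3 = M := by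
    have : σ3 * (σ3 * M * σ3) * σ3 = (σ3 * σ3) * M * (σ3 * σ3) := by
      noncomm_ring
    rw [this, sq3, one_mul, mul_one]
  rwa [e] at h

end W0KerTrivialAux

open W0KerTrivialAux Submodule Bornology in
/-- Lemma 1, part (i): if `X ∈ W₀` and `X(z) → 0` as `z → 0` along `ℂ ∖ Λ`,
then `X` vanishes identically on `ℂ ∖ Λ`. -/
theorem W0_ker_trivial (ω₁ ω₃ : ℂ)
    (hind : LinearIndependent ℝ ![ω₁, ω₃])
    (X : ℂ → Matrix (Fin 2) (Fin 2) ℂ) (hX : X ∈ W0 ω₁ ω₃)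
    (hlim : Tendsto X (𝓝[(lattice ω₁ ω₃)ᶜ] 0) (𝓝 0)) :
    ∀ z ∈ (lattice ω₁ ω₃)ᶜ, X z = 0 := by
  classical
  obtain ⟨hdiff, h1, _h2, h3⟩ := hX
  -- the scaled family is linearly independent, hence a basis of ℂ over ℝ
  have h2ind : LinearIndependent ℝ ![2 * ω₁, 2 * ω₃] := by
    have h := hind.units_smul ![Units.mk0 (2 : ℝ) two_ne_zero, Units.mk0 (2 : ℝ) two_ne_zero]
    have e : (![Units.mk0 (2 : ℝ) two_ne_zero, Units.mk0 (2 : ℝ) two_ne_zero] • ![ω₁, ω₃])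
        = ![2 * ω₁, 2 * ω₃] := by
      funext i
      fin_cases i <;>
        simp [Pi.smul_apply', Units.smul_def, Complex.real_smul] <;> norm_num
    rwa [e] at h
  let b : Module.Basis (Fin 2) ℝ ℂ :=
    basisOfLinearIndependentOfCardEqFinrank h2ind
      (by simp [Complex.finrank_real_complex])
  have hb : ⇑b = ![2 * ω₁, 2 * ω₃] :=
    coe_basisOfLinearIndependentOfCardEqFinrank _ _
  set L : Submodule ℤ ℂ := span ℤ (Set.range ⇑b) with hLdef
  have hLset : lattice ω₁ ω₃ = (L : Set ℂ) := by
    ext z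
    have hrange : Set.range ⇑b = {2 * ω₁, 2 * ω₃} := by
      rw [hb]
      simp only [Matrix.range_cons, Matrix.range_empty, Set.union_empty,
        Set.union_singleton]
      exact Set.pair_comm _ _
    simp only [lattice, Set.mem_setOf_eq, SetLike.mem_coe, hLdef, hrange,
      Submodule.mem_span_pair]
    constructor
    · rintro ⟨m, n, rfl⟩
      exact ⟨m, n, by push_cast [zsmul_eq_mul]; ring⟩
    · rintro ⟨m, n, h⟩
      exact ⟨m, n, by rw [← h]; push_cast [zsmul_eq_mul]; ring⟩
  haveI hLdisc : DiscreteTopology L := by rw [hLdef]; infer_instance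
  have hLclosed : IsClosed (L : Set ℂ) := by
    haveI : DiscreteTopology L.toAddSubgroup := inferInstanceAs (DiscreteTopology L)
    exact AddSubgroup.isClosed_of_discrete (H := L.toAddSubgroup)
  have hopen : IsOpen (lattice ω₁ ω₃)ᶜ := by
    rw [hLset]; exact hLclosed.isOpen_compl
  -- each lattice point is isolated
  have hiso : ∀ w ∈ (L : Set ℂ), IsClosed ((L : Set ℂ) \ {w}) := by
    intro w hw
    have hsing : IsOpen ({⟨w, hw⟩} : Set (L : Set ℂ)) := isOpen_discrete _
    rw [isOpen_induced_iff] at hsing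
    obtain ⟨U, hU, hUw⟩ := hsing
    have heq : (L : Set ℂ) \ {w} = (L : Set ℂ) ∩ Uᶜ := by
      ext z
      constructor
      · rintro ⟨hzL, hzw⟩
        refine ⟨hzL, fun hzU => hzw ?_⟩
        have : (⟨z, hzL⟩ : (L : Set ℂ)) ∈ Subtype.val ⁻¹' U := hzU
        rw [hUw] at this
        simpa using congrArg Subtype.val this
      · rintro ⟨hzL, hzU⟩
        refine ⟨hzL, fun hzw => hzU ?_⟩
        have : (⟨z, hzL⟩ : (L : Set ℂ)) ∈ ({⟨w, hw⟩} : Set (L : Set ℂ)) := by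
          simp only [Set.mem_singleton_iff]; exact Subtype.ext hzw
        rw [← hUw] at this
        exact this
    rw [heq]
    exact hLclosed.inter hU.isClosed_compl
  -- translation invariance of the lattice
  have hmem1 : ∀ z : ℂ, z ∈ lattice ω₁ ω₃ ↔ z + 2 * ω₁ ∈ lattice ω₁ ω₃ := by
    intro z
    constructor
    · rintro ⟨m, n, rfl⟩
      exact ⟨m + 1, n, by push_cast; ring⟩
    · rintro ⟨m, n, h⟩
      exact ⟨m - 1, n, by push_cast; linear_combination h⟩
  have hmem3 : ∀ z : ℂ, z ∈ lattice ω₁ ω₃ ↔ z + 2 * ω₃ ∈ lattice ω₁ ω₃ := by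
    intro z
    constructor
    · rintro ⟨m, n, rfl⟩
      exact ⟨m, n + 1, by push_cast; ring⟩
    · rintro ⟨m, n, h⟩
      exact ⟨m, n - 1, by push_cast; linear_combination h⟩
  -- the holomorphic extension by 0 at the lattice points
  set Y : ℂ → Matrix (Fin 2) (Fin 2) ℂ :=
    fun z => if z ∈ lattice ω₁ ω₃ then 0 else X z with hYdef
  have hYeq : ∀ z ∉ lattice ω₁ ω₃, Y z = X z := fun z hz => if_neg hz
  have hY0 : ∀ z ∈ lattice ω₁ ω₃, Y z = 0 := fun z hz => if_pos hz
  -- one-step norm periodicity of Y, everywhere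
  have hstep1 : ∀ z : ℂ, ‖Y (z + 2 * ω₁)‖ = ‖Y z‖ := by
    intro z
    by_cases hz : z ∈ lattice ω₁ ω₃
    · rw [hY0 _ hz, hY0 _ ((hmem1 z).1 hz)]
    · have hz' : z + 2 * ω₁ ∉ lattice ω₁ ω₃ := fun h => hz ((hmem1 z).2 h)
      rw [hYeq _ hz', hYeq _ hz, h1 z hz, conj1_norm]
  have hstep3 : ∀ z : ℂ, ‖Y (z + 2 * ω₃)‖ = ‖Y z‖ := by
    intro z
    by_cases hz : z ∈ lattice ω₁ ω₃
    · rw [hY0 _ hz, hY0 _ ((hmem3 z).1 hz)]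
    · have hz' : z + 2 * ω₃ ∉ lattice ω₁ ω₃ := fun h => hz ((hmem3 z).2 h)
      rw [hYeq _ hz', hYeq _ hz, h3 z hz, conj3_norm]
  -- ℤ-fold norm periodicity
  have hper1 : ∀ m : ℤ, ∀ z : ℂ, ‖Y (z + 2 * (m : ℂ) * ω₁)‖ = ‖Y z‖ := by
    intro m
    induction m using Int.induction_on with
    | zero => intro z; norm_num
    | succ k ih =>
        intro z
        have ih' : ∀ z : ℂ, ‖Y (z + 2 * (k : ℂ) * ω₁)‖ = ‖Y z‖ := by
          intro z; have := ih z; push_cast at this; exact this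
        have e : z + 2 * ((k : ℂ) + 1) * ω₁ = (z + 2 * (k : ℂ) * ω₁) + 2 * ω₁ := by ring
        push_cast
        rw [e, hstep1, ih']
    | pred k ih =>
        intro z
        have ih' : ∀ z : ℂ, ‖Y (z + 2 * (-(k : ℂ)) * ω₁)‖ = ‖Y z‖ := by
          intro z; have := ih z; push_cast at this; exact this
        have h' := hstep1 (z + 2 * (-(k : ℂ) - 1) * ω₁)
        have e : (z + 2 * (-(k : ℂ) - 1) * ω₁) + 2 * ω₁ = z + 2 * (-(k : ℂ)) * ω₁ := by ring
        rw [e, ih'] at h'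
        push_cast
        rw [← h']
  have hper3 : ∀ n : ℤ, ∀ z : ℂ, ‖Y (z + 2 * (n : ℂ) * ω₃)‖ = ‖Y z‖ := by
    intro n
    induction n using Int.induction_on with
    | zero => intro z; norm_num
    | succ k ih =>
        intro z
        have ih' : ∀ z : ℂ, ‖Y (z + 2 * (k : ℂ) * ω₃)‖ = ‖Y z‖ := by
          intro z; have := ih z; push_cast at this; exact this
        have e : z + 2 * ((k : ℂ) + 1) * ω₃ = (z + 2 * (k : ℂ) * ω₃) + 2 * ω₃ := by ring
        push_cast
        rw [e, hstep3, ih']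
    | pred k ih =>
        intro z
        have ih' : ∀ z : ℂ, ‖Y (z + 2 * (-(k : ℂ)) * ω₃)‖ = ‖Y z‖ := by
          intro z; have := ih z; push_cast at this; exact this
        have h' := hstep3 (z + 2 * (-(k : ℂ) - 1) * ω₃)
        have e : (z + 2 * (-(k : ℂ) - 1) * ω₃) + 2 * ω₃ = z + 2 * (-(k : ℂ)) * ω₃ := by ring
        rw [e, ih'] at h'
        push_cast
        rw [← h']
  have hper : ∀ v ∈ lattice ω₁ ω₃, ∀ z : ℂ, ‖Y (z + v)‖ = ‖Y z‖ := by
    rintro v ⟨m, n, rfl⟩ z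
    rw [show z + (2 * (m : ℂ) * ω₁ + 2 * (n : ℂ) * ω₃)
        = (z + 2 * (n : ℂ) * ω₃) + 2 * (m : ℂ) * ω₁ from by ring,
      hper1, hper3]
  -- continuity of Y at 0
  have hcont0 : Tendsto Y (𝓝 0) (𝓝 0) := by
    have hsplit : 𝓝 (0 : ℂ) = 𝓝[lattice ω₁ ω₃] 0 ⊔ 𝓝[(lattice ω₁ ω₃)ᶜ] 0 := by
      rw [← nhdsWithin_union, Set.union_compl_self, nhdsWithin_univ]
    rw [hsplit, tendsto_sup]
    constructor
    · refine Tendsto.congr' ?_ tendsto_const_nhds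
      filter_upwards [self_mem_nhdsWithin] with z hz using (hY0 z hz).symm
    · refine Tendsto.congr' ?_ hlim
      filter_upwards [self_mem_nhdsWithin] with z hz using (hYeq z hz).symm
  -- continuity of Y at each lattice point
  have hcontw : ∀ w ∈ lattice ω₁ ω₃, Tendsto Y (𝓝 w) (𝓝 0) := by
    intro w hw
    have ht : Tendsto (fun z : ℂ => z - w) (𝓝 w) (𝓝 0) := by
      simpa using (tendsto_id (x := 𝓝 w)).sub_const w
    have h2' : Tendsto (fun z : ℂ => ‖Y (z - w)‖) (𝓝 w) (𝓝 0) := by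
      have := (hcont0.comp ht).norm
      simpa using this
    have h3' : ∀ z : ℂ, ‖Y z‖ = ‖Y (z - w)‖ := by
      intro z
      have := hper w hw (z - w)
      rw [show z - w + w = z from by ring] at this
      exact this
    exact tendsto_zero_iff_norm_tendsto_zero.mpr ((tendsto_congr h3').mpr h2')
  -- Y is entire
  have hYd : DifferentiableOn ℂ Y (lattice ω₁ ω₃)ᶜ :=
    hdiff.congr fun z hz => hYeq z hz
  have hYdiff : Differentiable ℂ Y := by
    intro z
    by_cases hz : z ∈ lattice ω₁ ω₃
    · have hzL : z ∈ (L : Set ℂ) := hLset ▸ hz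
      have hUopen : IsOpen ((L : Set ℂ) \ {z})ᶜ := (hiso z hzL).isOpen_compl
      have hUmem : ((L : Set ℂ) \ {z})ᶜ ∈ 𝓝 z :=
        hUopen.mem_nhds (by simp)
      have hev : ∀ᶠ u in 𝓝[≠] z, DifferentiableAt ℂ Y u := by
        rw [eventually_nhdsWithin_iff]
        filter_upwards [hUmem] with u hu hne
        have huc : u ∉ lattice ω₁ ω₃ := by
          intro hmem
          exact hu ⟨hLset ▸ hmem, hne⟩
        exact hYd.differentiableAt (hopen.mem_nhds huc)
      have hca : ContinuousAt Y z := by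
        rw [ContinuousAt, hY0 z hz]
        exact hcontw z hz
      exact (Complex.analyticAt_of_differentiable_on_punctured_nhds_of_continuousAt
        hev hca).differentiableAt
    · exact hYd.differentiableAt (hopen.mem_nhds hz)
  -- Y is bounded
  have hKcpt : IsCompact (closure (ZSpan.fundamentalDomain b)) :=
    (ZSpan.fundamentalDomain_isBounded b).isCompact_closure
  obtain ⟨C, hC⟩ := hKcpt.exists_bound_of_continuousOn hYdiff.continuous.continuousOn
  have hbound : ∀ z : ℂ, ‖Y z‖ ≤ C := by
    intro z
    have hfr : ZSpan.fract b z ∈ ZSpan.fundamentalDomain b :=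
      ZSpan.fract_mem_fundamentalDomain b z
    have hfl : ((ZSpan.floor b z : ℂ)) ∈ lattice ω₁ ω₃ := by
      rw [hLset]
      exact (ZSpan.floor b z).2
    have hpz := hper _ hfl (ZSpan.fract b z)
    have e : ZSpan.fract b z + (ZSpan.floor b z : ℂ) = z := by
      rw [ZSpan.fract_apply]; ring
    rw [e] at hpz
    rw [hpz]
    exact hC _ (subset_closure hfr)
  have hrange : IsBounded (Set.range Y) :=
    isBounded_iff_forall_norm_le.2 ⟨C, by rintro x ⟨z, rfl⟩; exact hbound z⟩
  -- Liouville
  intro z hz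
  have h0L : (0 : ℂ) ∈ lattice ω₁ ω₃ := ⟨0, 0, by norm_num⟩
  have hzz := hYdiff.apply_eq_apply_of_bounded hrange z 0
  rw [hY0 0 h0L] at hzz
  rw [← hYeq z hz]
  exact hzz
end
end

section
/- If X ∈ W₀ and X(z) tends to a limit L ∈ Matrix (Fin 2) (Fin 2) ℂ as z → 0 along ℂ ∖ Λ, then there exists c ∈ ℂ such that L = c • 1 and X(z) = c • 1 for all z ∈ ℂ ∖ Λ. In particular, no element of W₀ behaves as σ_a + O(z) at z = 0 for any a = 1, 2, 3. -/
noncomputable section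

open Filter Topology

attribute [local instance] Matrix.normedAddCommGroup Matrix.normedSpace

/-! ### Auxiliary lemmas -/

lemma s1s1 : σ1 * σ1 = 1 := by simp [σ1, Matrix.mul_fin_two, Matrix.one_fin_two]

lemma s3s3 : σ3 * σ3 = 1 := by simp [σ3, Matrix.mul_fin_two, Matrix.one_fin_two]

lemma conj1_eq (M : Matrix (Fin 2) (Fin 2) ℂ) :
    σ1 * M * σ1 = !![M 1 1, M 1 0; M 0 1, M 0 0] := by
  rw [Matrix.eta_fin_two M]; simp [σ1, Matrix.mul_fin_two]

lemma conj3_eq (M : Matrix (Fin 2) (Fin 2) ℂ) :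
    σ3 * M * σ3 = !![M 0 0, -(M 0 1); -(M 1 0), M 1 1] := by
  rw [Matrix.eta_fin_two M]; simp [σ3, Matrix.mul_fin_two]

lemma norm_conj1_le (M : Matrix (Fin 2) (Fin 2) ℂ) : ‖σ1 * M * σ1‖ ≤ ‖M‖ := by
  rw [conj1_eq]
  refine (Matrix.norm_le_iff (norm_nonneg M)).2 ?_
  intro i j; fin_cases i <;> fin_cases j <;> simp <;>
    · exact Matrix.norm_entry_le_entrywise_sup_norm M

lemma norm_conj3_le (M : Matrix (Fin 2) (Fin 2) ℂ) : ‖σ3 * M * σ3‖ ≤ ‖M‖ := by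
  rw [conj3_eq]
  refine (Matrix.norm_le_iff (norm_nonneg M)).2 ?_
  intro i j; fin_cases i <;> fin_cases j <;> simp <;>
    · exact Matrix.norm_entry_le_entrywise_sup_norm M

variable {ω₁ ω₃ : ℂ}

lemma lat_zero : (0 : ℂ) ∈ lattice ω₁ ω₃ := ⟨0, 0, by push_cast; ring⟩

lemma lat_add {p q : ℂ} (hp : p ∈ lattice ω₁ ω₃) (hq : q ∈ lattice ω₁ ω₃) :
    p + q ∈ lattice ω₁ ω₃ := by
  obtain ⟨m, n, rfl⟩ := hp; obtain ⟨m', n', rfl⟩ := hq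
  exact ⟨m + m', n + n', by push_cast; ring⟩

lemma lat_neg {p : ℂ} (hp : p ∈ lattice ω₁ ω₃) : -p ∈ lattice ω₁ ω₃ := by
  obtain ⟨m, n, rfl⟩ := hp; exact ⟨-m, -n, by push_cast; ring⟩

lemma lat_compl_translate {z p : ℂ} (hz : z ∈ (lattice ω₁ ω₃)ᶜ)
    (hp : p ∈ lattice ω₁ ω₃) : z + p ∈ (lattice ω₁ ω₃)ᶜ := by
  intro h
  exact hz (by simpa using lat_add h (lat_neg hp))

/-- The lattice as the ℤ-span of the basis `![2ω₁, 2ω₃]`. -/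
lemma lat_eq_span (hind : LinearIndependent ℝ ![ω₁, ω₃]) :
    ∃ b : Module.Basis (Fin 2) ℝ ℂ, (⇑b = ![2 * ω₁, 2 * ω₃]) ∧
      lattice ω₁ ω₃ = (Submodule.span ℤ (Set.range ⇑b) : Set ℂ) := by
  have hind2 : LinearIndependent ℝ ![2 * ω₁, 2 * ω₃] := by
    have h := hind.units_smul ![Units.mk0 (2:ℝ) two_ne_zero, Units.mk0 (2:ℝ) two_ne_zero]
    convert h using 1
    funext i
    fin_cases i <;> simp [Complex.real_smul] <;> ring
  refine ⟨basisOfLinearIndependentOfCardEqFinrank hind2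
    (by simp [Complex.finrank_real_complex]), ?_, ?_⟩
  · exact coe_basisOfLinearIndependentOfCardEqFinrank hind2 _
  · rw [coe_basisOfLinearIndependentOfCardEqFinrank hind2 _]
    have hr : Set.range ![2 * ω₁, 2 * ω₃] = {2 * ω₁, 2 * ω₃} := by
      ext x; simp [Matrix.range_cons, Matrix.range_empty]; tauto
    rw [hr]
    ext z
    simp only [lattice, Set.mem_setOf_eq, SetLike.mem_coe, Submodule.mem_span_pair]
    constructor
    · rintro ⟨m, n, rfl⟩
      exact ⟨m, n, by push_cast [zsmul_eq_mul]; ring⟩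
    · rintro ⟨m, n, rfl⟩
      exact ⟨m, n, by push_cast [zsmul_eq_mul]; ring⟩

lemma lat_isClosed (hind : LinearIndependent ℝ ![ω₁, ω₃]) : IsClosed (lattice ω₁ ω₃) := by
  obtain ⟨b, -, hspan⟩ := lat_eq_span hind
  rw [hspan]
  exact AddSubgroup.isClosed_of_discrete (H := (Submodule.span ℤ (Set.range ⇑b)).toAddSubgroup)

lemma lat_isolated (hind : LinearIndependent ℝ ![ω₁, ω₃]) :
    ∃ ε > 0, ∀ q ∈ lattice ω₁ ω₃, ‖q‖ < ε → q = 0 := by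
  obtain ⟨b, -, hspan⟩ := lat_eq_span hind
  set S := Submodule.span ℤ (Set.range ⇑b)
  have h0 : IsOpen ({⟨0, S.zero_mem⟩} : Set S) := isOpen_discrete _
  rw [isOpen_induced_iff] at h0
  obtain ⟨t, ht, hpre⟩ := h0
  have h0t : (0 : ℂ) ∈ t := by
    have : (⟨0, S.zero_mem⟩ : S) ∈ (Subtype.val ⁻¹' t : Set S) := by
      rw [hpre]; rfl
    exact this
  obtain ⟨ε, hε, hball⟩ := Metric.isOpen_iff.1 ht 0 h0t
  refine ⟨ε, hε, fun q hq hnorm => ?_⟩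
  rw [hspan] at hq
  have : (⟨q, hq⟩ : S) ∈ (Subtype.val ⁻¹' t : Set S) := by
    apply hball
    simpa [Metric.mem_ball, dist_zero_right] using hnorm
  rw [hpre] at this
  simpa using Subtype.ext_iff.1 this

lemma lat_fundamental (hind : LinearIndependent ℝ ![ω₁, ω₃]) :
    ∃ K : Set ℂ, IsCompact K ∧ ∀ z : ℂ, ∃ p ∈ lattice ω₁ ω₃, z - p ∈ K := by
  obtain ⟨b, -, hspan⟩ := lat_eq_span hind
  refine ⟨closure (ZSpan.fundamentalDomain b),
    (ZSpan.fundamentalDomain_isBounded b).isCompact_closure, fun z => ?_⟩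
  refine ⟨(ZSpan.floor b z : ℂ), ?_, ?_⟩
  · rw [hspan]; exact (ZSpan.floor b z).2
  · rw [← ZSpan.fract_apply]
    exact subset_closure (ZSpan.fract_mem_fundamentalDomain b z)

lemma lat_countable : (lattice ω₁ ω₃).Countable := by
  have h := Set.countable_range
    (fun mn : ℤ × ℤ => 2 * (mn.1 : ℂ) * ω₁ + 2 * (mn.2 : ℂ) * ω₃)
  refine h.mono ?_
  rintro z ⟨m, n, rfl⟩
  exact ⟨(m, n), rfl⟩

/-- if `X ∈ W₀` tends to a limit `L` as `z → 0` along `ℂ ∖ Λ`, then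
`L = c • 1` for some `c ∈ ℂ` and `X` is constantly `c • 1` on `ℂ ∖ Λ`. -/
theorem W0_limit_is_scalar (ω₁ ω₃ : ℂ)
    (hind : LinearIndependent ℝ ![ω₁, ω₃])
    (X : ℂ → Matrix (Fin 2) (Fin 2) ℂ) (hX : X ∈ W0 ω₁ ω₃)
    (L : Matrix (Fin 2) (Fin 2) ℂ)
    (hlim : Tendsto X (𝓝[(lattice ω₁ ω₃)ᶜ] 0) (𝓝 L)) :
    ∃ c : ℂ, L = c • (1 : Matrix (Fin 2) (Fin 2) ℂ) ∧
      ∀ z ∈ (lattice ω₁ ω₃)ᶜ, X z = c • (1 : Matrix (Fin 2) (Fin 2) ℂ) := by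
  classical
  haveI : CompleteSpace (Matrix (Fin 2) (Fin 2) ℂ) := FiniteDimensional.complete ℂ _
  obtain ⟨hol, h1, -, h3⟩ := hX
  set Λ : Set ℂ := lattice ω₁ ω₃ with hΛ
  have hopen : IsOpen Λᶜ := (lat_isClosed hind).isOpen_compl
  obtain ⟨ε, hε, hiso⟩ := lat_isolated hind
  -- locally, near a lattice point `p`, the punctured filter agrees with the filter along `Λᶜ`
  have nhds_eq : ∀ p ∈ Λ, 𝓝[Λᶜ] p = 𝓝[≠] p := by
    intro p hp
    refine nhdsWithin_eq_nhdsWithin' (Metric.ball_mem_nhds p hε) ?_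
    ext z
    simp only [Set.mem_inter_iff, Set.mem_compl_iff, Set.mem_singleton_iff, Metric.mem_ball]
    constructor
    · rintro ⟨hz, hb⟩; exact ⟨fun h => hz (h ▸ hp), hb⟩
    · rintro ⟨hz, hb⟩
      refine ⟨fun hzΛ => hz ?_, hb⟩
      have hsub : z - p ∈ Λ := by
        simpa [sub_eq_add_neg] using lat_add hzΛ (lat_neg hp)
      have : z - p = 0 := hiso _ hsub (by rwa [← dist_eq_norm])
      exact sub_eq_zero.1 this
  -- the twisted translation structure for every lattice vector
  set R : ℂ → Prop := fun p => p ∈ Λ ∧ ∃ A B : Matrix (Fin 2) (Fin 2) ℂ,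
    A * B = 1 ∧ B * A = 1 ∧ (∀ M, ‖A * M * B‖ ≤ ‖M‖) ∧ (∀ M, ‖B * M * A‖ ≤ ‖M‖) ∧
    (∀ z ∈ Λᶜ, X (z + p) = A * X z * B) with hR
  have Rzero : R 0 := ⟨lat_zero, 1, 1, one_mul 1, one_mul 1,
    fun M => by simp, fun M => by simp, fun z _ => by simp⟩
  have R1 : R (2 * ω₁) := ⟨⟨1, 0, by push_cast; ring⟩, σ1, σ1, s1s1, s1s1,
    norm_conj1_le, norm_conj1_le, h1⟩
  have R3 : R (2 * ω₃) := ⟨⟨0, 1, by push_cast; ring⟩, σ3, σ3, s3s3, s3s3,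
    norm_conj3_le, norm_conj3_le, h3⟩
  have Radd : ∀ {p q}, R p → R q → R (p + q) := by
    rintro p q ⟨hpΛ, A, B, hAB, hBA, hnAB, hnBA, hper⟩ ⟨hqΛ, C, D, hCD, hDC, hnCD, hnDC, hper'⟩
    refine ⟨lat_add hpΛ hqΛ, A * C, D * B, ?_, ?_, ?_, ?_, ?_⟩
    · calc A * C * (D * B) = A * (C * D) * B := by simp only [mul_assoc]
      _ = 1 := by rw [hCD, mul_one, hAB]
    · calc D * B * (A * C) = D * (B * A) * C := by simp only [mul_assoc]
      _ = 1 := by rw [hBA, mul_one, hDC]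
    · intro M
      calc ‖A * C * M * (D * B)‖ = ‖A * (C * M * D) * B‖ := by simp only [mul_assoc]
      _ ≤ ‖C * M * D‖ := hnAB _
      _ ≤ ‖M‖ := hnCD _
    · intro M
      calc ‖D * B * M * (A * C)‖ = ‖D * (B * M * A) * C‖ := by simp only [mul_assoc]
      _ ≤ ‖B * M * A‖ := hnDC _
      _ ≤ ‖M‖ := hnBA _
    · intro z hz
      have hzq : z + q ∈ Λᶜ := lat_compl_translate hz hqΛ
      calc X (z + (p + q)) = X ((z + q) + p) := by ring_nf
      _ = A * X (z + q) * B := hper _ hzq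
      _ = A * (C * X z * D) * B := by rw [hper' _ hz]
      _ = A * C * X z * (D * B) := by simp only [mul_assoc]
  have Rneg : ∀ {p}, R p → R (-p) := by
    rintro p ⟨hpΛ, A, B, hAB, hBA, hnAB, hnBA, hper⟩
    refine ⟨lat_neg hpΛ, B, A, hBA, hAB, hnBA, hnAB, ?_⟩
    intro z hz
    have hw : z + -p ∈ Λᶜ := lat_compl_translate hz (lat_neg hpΛ)
    have hz' : X z = A * X (z + -p) * B := by
      have := hper _ hw
      rwa [add_assoc, neg_add_cancel, add_zero] at this
    rw [hz']
    symm
    calc B * (A * X (z + -p) * B) * A = (B * A) * (X (z + -p) * (B * A)) := by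
          simp only [mul_assoc]
    _ = X (z + -p) := by rw [hBA]; simp
  have Rext : ∀ {a b : ℂ}, a = b → R a → R b := fun h hr => h ▸ hr
  have key : ∀ p ∈ Λ, R p := by
    rintro p ⟨m, n, rfl⟩
    have Rm : ∀ m : ℤ, R (2 * (m : ℂ) * ω₁) := by
      intro m
      induction m using Int.induction_on with
      | zero => simpa using Rzero
      | succ k ih =>
        exact Rext (by push_cast; ring) (Radd ih R1)
      | pred k ih =>
        exact Rext (by push_cast; ring) (Radd ih (Rneg R1))
    have Rn : ∀ n : ℤ, R (2 * (n : ℂ) * ω₃) := by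
      intro n
      induction n using Int.induction_on with
      | zero => simpa using Rzero
      | succ k ih =>
        exact Rext (by push_cast; ring) (Radd ih R3)
      | pred k ih =>
        exact Rext (by push_cast; ring) (Radd ih (Rneg R3))
    exact Radd (Rm m) (Rn n)
  -- `X` tends to a limit at every lattice point
  have hlimp : ∀ p ∈ Λ, ∃ Lp, Tendsto X (𝓝[Λᶜ] p) (𝓝 Lp) := by
    intro p hp
    obtain ⟨-, A, B, -, -, -, -, hper⟩ := key p hp
    refine ⟨A * L * B, ?_⟩
    have htr : Tendsto (fun w => w + -p) (𝓝[Λᶜ] p) (𝓝[Λᶜ] 0) := by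
      apply tendsto_nhdsWithin_of_tendsto_nhds_of_eventually_within
      · have : Tendsto (fun w : ℂ => w + -p) (𝓝 p) (𝓝 (p + -p)) :=
          (continuous_add_right (-p)).tendsto p
        rw [add_neg_cancel] at this
        exact this.mono_left nhdsWithin_le_nhds
      · exact eventually_mem_nhdsWithin.mono fun w hw =>
          lat_compl_translate hw (lat_neg hp)
    have hXcomp : Tendsto (fun w => X (w + -p)) (𝓝[Λᶜ] p) (𝓝 L) := hlim.comp htr
    have φcont : Continuous (fun M : Matrix (Fin 2) (Fin 2) ℂ => A * M * B) := by
      have : (fun M : Matrix (Fin 2) (Fin 2) ℂ => A * M * B) =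
          ((LinearMap.mulRight ℂ B).comp (LinearMap.mulLeft ℂ A) :
            Matrix (Fin 2) (Fin 2) ℂ →ₗ[ℂ] Matrix (Fin 2) (Fin 2) ℂ) := by
        funext M; simp [LinearMap.mulRight_apply, LinearMap.mulLeft_apply]
      rw [this]
      exact LinearMap.continuous_of_finiteDimensional _
    have : Tendsto (fun w => A * X (w + -p) * B) (𝓝[Λᶜ] p) (𝓝 (A * L * B)) :=
      (φcont.tendsto L).comp hXcomp
    refine Filter.Tendsto.congr' ?_ this
    refine eventually_mem_nhdsWithin.mono fun w hw => ?_
    have hw' : (w + -p) + p = w := by ring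
    have h := hper (w + -p) (lat_compl_translate hw (lat_neg hp))
    rw [hw'] at h
    exact h.symm
  -- the holomorphic extension of `X` to all of `ℂ`
  set F : ℂ → Matrix (Fin 2) (Fin 2) ℂ :=
    fun z => if z ∈ Λ then limUnder (𝓝[Λᶜ] z) X else X z with hF
  have hFeq : ∀ z ∈ Λᶜ, F z = X z := fun z hz => if_neg hz
  have hneBot : ∀ p ∈ Λ, (𝓝[Λᶜ] p).NeBot := by
    intro p hp
    rw [nhds_eq p hp]
    infer_instance
  have hFlat : ∀ p ∈ Λ, Tendsto X (𝓝[Λᶜ] p) (𝓝 (F p)) := by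
    intro p hp
    obtain ⟨Lp, hLp⟩ := hlimp p hp
    haveI := hneBot p hp
    have : F p = Lp := by rw [hF]; simp only [if_pos hp]; exact hLp.limUnder_eq
    rw [this]
    exact hLp
  have hcontF : ∀ p ∈ Λ, ContinuousAt F p := by
    intro p hp
    rw [← continuousWithinAt_compl_self]
    show Tendsto F (𝓝[≠] p) (𝓝 (F p))
    rw [← nhds_eq p hp]
    refine Filter.Tendsto.congr' ?_ (hFlat p hp)
    exact eventually_mem_nhdsWithin.mono fun z hz => (hFeq z hz).symm
  have hdiffC : ∀ z ∈ Λᶜ, DifferentiableAt ℂ F z := by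
    intro z hz
    have hX : DifferentiableAt ℂ X z := (hol z hz).differentiableAt (hopen.mem_nhds hz)
    refine hX.congr_of_eventuallyEq ?_
    exact Filter.eventuallyEq_of_mem (hopen.mem_nhds hz) hFeq
  have hdiff : Differentiable ℂ F := by
    intro z
    by_cases hz : z ∈ Λ
    · refine (Complex.analyticAt_of_differentiable_on_punctured_nhds_of_continuousAt
        ?_ (hcontF z hz)).differentiableAt
      rw [← nhds_eq z hz]
      exact eventually_mem_nhdsWithin.mono fun w hw => hdiffC w hw
    · exact hdiffC z hz
  have hdense : Dense Λᶜ := Set.Countable.dense_compl ℂ lat_countable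
  -- `F` inherits the twisted periodicity everywhere, hence is bounded
  have hFper : ∀ p ∈ Λ, ∃ A B : Matrix (Fin 2) (Fin 2) ℂ,
      (∀ M, ‖A * M * B‖ ≤ ‖M‖) ∧ ∀ z : ℂ, F (z + p) = A * F z * B := by
    intro p hp
    obtain ⟨-, A, B, -, -, hnAB, -, hper⟩ := key p hp
    refine ⟨A, B, hnAB, ?_⟩
    have φcont : Continuous (fun M : Matrix (Fin 2) (Fin 2) ℂ => A * M * B) := by
      have : (fun M : Matrix (Fin 2) (Fin 2) ℂ => A * M * B) =
          ((LinearMap.mulRight ℂ B).comp (LinearMap.mulLeft ℂ A) :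
            Matrix (Fin 2) (Fin 2) ℂ →ₗ[ℂ] Matrix (Fin 2) (Fin 2) ℂ) := by
        funext M; simp [LinearMap.mulRight_apply, LinearMap.mulLeft_apply]
      rw [this]
      exact LinearMap.continuous_of_finiteDimensional _
    have hc1 : Continuous (fun z => F (z + p)) :=
      hdiff.continuous.comp (continuous_add_right p)
    have hc2 : Continuous (fun z => A * F z * B) := φcont.comp hdiff.continuous
    have heqon : Set.EqOn (fun z => F (z + p)) (fun z => A * F z * B) Λᶜ := by
      intro z hz
      have hzp : z + p ∈ Λᶜ := lat_compl_translate hz hp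
      show F (z + p) = A * F z * B
      rw [hFeq _ hzp, hFeq _ hz]
      exact hper z hz
    exact fun z => congrFun (hc1.ext_on hdense hc2 heqon) z
  have hbdd : Bornology.IsBounded (Set.range F) := by
    obtain ⟨K, hK, hKfund⟩ := lat_fundamental hind
    obtain ⟨C, hC⟩ := hK.exists_bound_of_continuousOn hdiff.continuous.continuousOn
    rw [isBounded_iff_forall_norm_le]
    refine ⟨C, ?_⟩
    rintro - ⟨z, rfl⟩
    obtain ⟨p, hp, hzK⟩ := hKfund z
    obtain ⟨A, B, hnAB, hperF⟩ := hFper p hp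
    have : F z = A * F (z - p) * B := by
      have := hperF (z - p)
      rwa [sub_add_cancel] at this
    rw [this]
    exact (hnAB _).trans (hC _ hzK)
  -- Liouville: `F` is constant
  have hconst : ∀ z : ℂ, F z = F 0 := fun z => hdiff.apply_eq_apply_of_bounded hbdd z 0
  have hF0 : F 0 = L := by
    haveI := hneBot 0 lat_zero
    rw [hF]
    simp only [if_pos (show (0:ℂ) ∈ Λ from lat_zero)]
    exact hlim.limUnder_eq
  have hXL : ∀ z ∈ Λᶜ, X z = L := by
    intro z hz
    rw [← hFeq z hz, hconst z, hF0]
  -- `L` commutes with `σ1` and `σ3`, hence is scalar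
  obtain ⟨z₀, hz₀⟩ : ∃ z₀, z₀ ∈ Λᶜ := hdense.nonempty
  have hz₁ : z₀ + 2 * ω₁ ∈ Λᶜ := lat_compl_translate hz₀ ⟨1, 0, by push_cast; ring⟩
  have hz₃ : z₀ + 2 * ω₃ ∈ Λᶜ := lat_compl_translate hz₀ ⟨0, 1, by push_cast; ring⟩
  have hL1 : L = σ1 * L * σ1 := by
    have := h1 z₀ hz₀
    rwa [hXL _ hz₁, hXL _ hz₀] at this
  have hL3 : L = σ3 * L * σ3 := by
    have := h3 z₀ hz₀
    rwa [hXL _ hz₃, hXL _ hz₀] at this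
  rw [conj1_eq] at hL1
  rw [conj3_eq] at hL3
  have h01 : L 0 1 = 0 := by
    have e : L 0 1 = -(L 0 1) := by simpa using congrFun (congrFun hL3 0) 1
    exact CharZero.eq_neg_self_iff.1 e
  have h10 : L 1 0 = 0 := by
    have e : L 1 0 = -(L 1 0) := by simpa using congrFun (congrFun hL3 1) 0
    exact CharZero.eq_neg_self_iff.1 e
  have h11 : L 1 1 = L 0 0 := by
    simpa using (congrFun (congrFun hL1 0) 0).symm
  have hscal : L = (L 0 0) • (1 : Matrix (Fin 2) (Fin 2) ℂ) := by
    have hone : (L 0 0) • (1 : Matrix (Fin 2) (Fin 2) ℂ) = !![L 0 0, 0; 0, L 0 0] := by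
      ext i j; fin_cases i <;> fin_cases j <;> simp [Matrix.one_apply]
    rw [hone]
    conv_lhs => rw [Matrix.eta_fin_two L, h01, h10, h11]
  exact ⟨L 0 0, hscal, fun z hz => (hXL z hz).trans hscal⟩
end
end

section
/- There is no X ∈ W₀ such that the function z ↦ X(z) - z⁻¹ • 1 tends to a limit as z → 0 along ℂ ∖ Λ. In particular, no element of W₀ behaves as z⁻¹·I + O(z) at the origin. -/
noncomputable section

open Filter Topology

attribute [local instance] Matrix.normedAddCommGroup Matrix.normedSpace

namespace AuxW0

open Metric Set

variable {ω₁ ω₃ : ℂ}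

lemma indep (hind : LinearIndependent ℝ ![ω₁, ω₃]) :
    ∀ a b : ℝ, (a : ℂ) * ω₁ + (b : ℂ) * ω₃ = 0 → a = 0 ∧ b = 0 := by
  intro a b hab
  have h := Fintype.linearIndependent_iff.mp hind ![a, b] ?_
  · exact ⟨h 0, h 1⟩
  · simpa [Fin.sum_univ_two, Complex.real_smul] using hab

lemma lat_add {x y : ℂ} (hx : x ∈ lattice ω₁ ω₃) (hy : y ∈ lattice ω₁ ω₃) :
    x + y ∈ lattice ω₁ ω₃ := by
  obtain ⟨m, n, rfl⟩ := hx; obtain ⟨m', n', rfl⟩ := hy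
  exact ⟨m + m', n + n', by push_cast; ring⟩

lemma lat_neg {x : ℂ} (hx : x ∈ lattice ω₁ ω₃) : -x ∈ lattice ω₁ ω₃ := by
  obtain ⟨m, n, rfl⟩ := hx
  exact ⟨-m, -n, by push_cast; ring⟩

lemma lat_zero : (0 : ℂ) ∈ lattice ω₁ ω₃ := ⟨0, 0, by simp⟩
lemma lat_w1 : 2 * ω₁ ∈ lattice ω₁ ω₃ := ⟨1, 0, by simp⟩
lemma lat_w3 : 2 * ω₃ ∈ lattice ω₁ ω₃ := ⟨0, 1, by simp⟩

lemma li2 (hind : LinearIndependent ℝ ![ω₁, ω₃]) :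
    LinearIndependent ℝ ![2 * ω₁, 2 * ω₃] := by
  rw [Fintype.linearIndependent_iff]
  intro g hg
  have h2 : ((2 * g 0 : ℝ) : ℂ) * ω₁ + ((2 * g 1 : ℝ) : ℂ) * ω₃ = 0 := by
    simp [Fin.sum_univ_two, Complex.real_smul] at hg ⊢
    push_cast
    linear_combination hg
  obtain ⟨h0, h1⟩ := indep hind _ _ h2
  intro i
  fin_cases i <;> simp_all <;> linarith

def bas (hind : LinearIndependent ℝ ![ω₁, ω₃]) : Module.Basis (Fin 2) ℝ ℂ :=
  basisOfLinearIndependentOfCardEqFinrank (li2 hind)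
    (by simp [Complex.finrank_real_complex])

lemma bas_apply (hind : LinearIndependent ℝ ![ω₁, ω₃]) :
    ⇑(bas hind) = ![2 * ω₁, 2 * ω₃] :=
  coe_basisOfLinearIndependentOfCardEqFinrank _ _

lemma repr_combo (hind : LinearIndependent ℝ ![ω₁, ω₃]) (s t : ℝ) :
    (bas hind).repr ((s : ℂ) * (2 * ω₁) + (t : ℂ) * (2 * ω₃)) =
      Finsupp.single 0 s + Finsupp.single 1 t := by
  have h0 : (bas hind) 0 = 2 * ω₁ := by rw [bas_apply]; rfl
  have h1 : (bas hind) 1 = 2 * ω₃ := by rw [bas_apply]; rfl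
  have : (s : ℂ) * (2 * ω₁) + (t : ℂ) * (2 * ω₃)
      = s • ((bas hind) 0) + t • ((bas hind) 1) := by
    rw [h0, h1]; simp [Complex.real_smul]
  rw [this, map_add, map_smul, map_smul, Module.Basis.repr_self, Module.Basis.repr_self]
  ext i
  simp [Finsupp.smul_single]

lemma mem_lat_iff (hind : LinearIndependent ℝ ![ω₁, ω₃]) {z : ℂ} :
    z ∈ lattice ω₁ ω₃ ↔
      (∃ m : ℤ, (bas hind).repr z 0 = m) ∧ (∃ n : ℤ, (bas hind).repr z 1 = n) := by
  constructor
  · rintro ⟨m, n, rfl⟩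
    have : 2 * (m : ℂ) * ω₁ + 2 * (n : ℂ) * ω₃
        = ((m : ℝ) : ℂ) * (2 * ω₁) + ((n : ℝ) : ℂ) * (2 * ω₃) := by push_cast; ring
    rw [this, repr_combo hind]
    exact ⟨⟨m, by simp⟩, ⟨n, by simp⟩⟩
  · rintro ⟨⟨m, hm⟩, ⟨n, hn⟩⟩
    refine ⟨m, n, ?_⟩
    have hz := (bas hind).sum_repr z
    rw [Fin.sum_univ_two] at hz
    rw [← hz, hm, hn, bas_apply]
    push_cast
    simp [Complex.real_smul]
    ring

lemma lat_discrete (hind : LinearIndependent ℝ ![ω₁, ω₃]) :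
    ∃ δ > 0, ∀ z ∈ lattice ω₁ ω₃, ‖z‖ < δ → z = 0 := by
  set T := (bas hind).equivFunL
  have hc : Continuous T := T.continuous
  have h0 : T 0 = 0 := by simp
  obtain ⟨δ, hδ, hball⟩ := Metric.continuousAt_iff.mp hc.continuousAt (1/2) (by norm_num)
  refine ⟨δ, hδ, fun z hz hzδ => ?_⟩
  have hd : dist (T z) (T 0) < 1/2 := hball (by simpa [dist_eq_norm] using hzδ)
  rw [h0, dist_zero_right] at hd
  obtain ⟨⟨m, hm⟩, ⟨n, hn⟩⟩ := (mem_lat_iff hind).mp hz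
  have hTz : ∀ i, T z i = (bas hind).repr z i := fun i => rfl
  have hmb : |(m : ℝ)| < 1/2 := by
    calc |(m:ℝ)| = ‖T z 0‖ := by rw [hTz, hm]; simp
    _ ≤ ‖T z‖ := norm_le_pi_norm _ 0
    _ < 1/2 := hd
  have hnb : |(n : ℝ)| < 1/2 := by
    calc |(n:ℝ)| = ‖T z 1‖ := by rw [hTz, hn]; simp
    _ ≤ ‖T z‖ := norm_le_pi_norm _ 1
    _ < 1/2 := hd
  have hm0 : m = 0 := by
    have h1 : |(m:ℝ)| < 1 := lt_trans hmb (by norm_num)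
    rw [← Int.cast_abs] at h1
    have : |m| < 1 := by exact_mod_cast h1
    exact Int.abs_lt_one_iff.mp this
  have hn0 : n = 0 := by
    have h1 : |(n:ℝ)| < 1 := lt_trans hnb (by norm_num)
    rw [← Int.cast_abs] at h1
    have : |n| < 1 := by exact_mod_cast h1
    exact Int.abs_lt_one_iff.mp this
  obtain ⟨m', n', rfl⟩ := hz
  have hcast : (m' : ℝ) = (m : ℝ) ∧ (n' : ℝ) = (n : ℝ) := by
    constructor
    · rw [← hm]
      have : 2 * (m' : ℂ) * ω₁ + 2 * (n' : ℂ) * ω₃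
          = ((m' : ℝ) : ℂ) * (2 * ω₁) + ((n' : ℝ) : ℂ) * (2 * ω₃) := by push_cast; ring
      rw [this, repr_combo hind]; simp
    · rw [← hn]
      have : 2 * (m' : ℂ) * ω₁ + 2 * (n' : ℂ) * ω₃
          = ((m' : ℝ) : ℂ) * (2 * ω₁) + ((n' : ℝ) : ℂ) * (2 * ω₃) := by push_cast; ring
      rw [this, repr_combo hind]; simp
  have hm' : m' = 0 := by have := hcast.1; rw [hm0] at this; exact_mod_cast this
  have hn' : n' = 0 := by have := hcast.2; rw [hn0] at this; exact_mod_cast this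
  simp [hm', hn']

lemma lat_closed (hind : LinearIndependent ℝ ![ω₁, ω₃]) :
    IsClosed (lattice ω₁ ω₃) := by
  set T := (bas hind).equivFunL
  have : lattice ω₁ ω₃ =
      (⇑T) ⁻¹' ({p : Fin 2 → ℝ | p 0 ∈ Set.range ((↑) : ℤ → ℝ)} ∩
        {p | p 1 ∈ Set.range ((↑) : ℤ → ℝ)}) := by
    ext z
    rw [Set.mem_preimage, Set.mem_inter_iff]
    exact (mem_lat_iff hind).trans (by
      constructor
      · rintro ⟨⟨m, hm⟩, n, hn⟩
        exact ⟨⟨m, hm.symm⟩, ⟨n, hn.symm⟩⟩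
      · rintro ⟨⟨m, hm⟩, n, hn⟩
        exact ⟨⟨m, hm.symm⟩, ⟨n, hn.symm⟩⟩)
  rw [this]
  apply IsClosed.preimage T.continuous
  exact ((Int.isClosedEmbedding_coe_real.isClosed_range.preimage (continuous_apply 0)).inter
    (Int.isClosedEmbedding_coe_real.isClosed_range.preimage (continuous_apply 1)))

lemma lat_countable : (lattice ω₁ ω₃).Countable := by
  have : lattice ω₁ ω₃ ⊆
      Set.range (fun p : ℤ × ℤ => 2 * (p.1 : ℂ) * ω₁ + 2 * (p.2 : ℂ) * ω₃) := by
    rintro z ⟨m, n, rfl⟩; exact ⟨(m, n), rfl⟩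
  exact (Set.countable_range _).mono this

lemma lat_cover (hind : LinearIndependent ℝ ![ω₁, ω₃]) :
    ∃ K : Set ℂ, IsCompact K ∧ ∀ z : ℂ, ∃ l ∈ lattice ω₁ ω₃, z - l ∈ K := by
  refine ⟨(fun p : ℝ × ℝ => (p.1 : ℂ) * (2 * ω₁) + (p.2 : ℂ) * (2 * ω₃)) ''
    (Set.Icc 0 1 ×ˢ Set.Icc 0 1), ?_, ?_⟩
  · exact (isCompact_Icc.prod isCompact_Icc).image (by continuity)
  · intro z
    set s : ℝ := (bas hind).repr z 0
    set t : ℝ := (bas hind).repr z 1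
    have hz := (bas hind).sum_repr z
    rw [Fin.sum_univ_two] at hz
    have hzst : z = (s : ℂ) * (2 * ω₁) + (t : ℂ) * (2 * ω₃) := by
      rw [← hz, bas_apply]
      simp [Complex.real_smul, s, t]
    refine ⟨2 * (⌊s⌋ : ℂ) * ω₁ + 2 * (⌊t⌋ : ℂ) * ω₃, ⟨⌊s⌋, ⌊t⌋, rfl⟩,
      ⟨(s - ⌊s⌋, t - ⌊t⌋), ?_, ?_⟩⟩
    · constructor
      · exact ⟨Int.fract_nonneg s, le_of_lt (Int.fract_lt_one s)⟩
      · exact ⟨Int.fract_nonneg t, le_of_lt (Int.fract_lt_one t)⟩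
    · rw [hzst]; push_cast; ring

lemma w1_not_lat (hind : LinearIndependent ℝ ![ω₁, ω₃]) : ω₁ ∉ lattice ω₁ ω₃ := by
  rintro ⟨m, n, h⟩
  have : ((1 - 2 * m : ℝ) : ℂ) * ω₁ + ((-(2 * n) : ℝ) : ℂ) * ω₃ = 0 := by
    push_cast; linear_combination h
  have h1 := (indep hind _ _ this).1
  have : (2 * m : ℝ) = 1 := by linarith
  have : (2 * m : ℤ) = 1 := by exact_mod_cast this
  omega

lemma w3_not_lat (hind : LinearIndependent ℝ ![ω₁, ω₃]) : ω₃ ∉ lattice ω₁ ω₃ := by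
  rintro ⟨m, n, h⟩
  have : ((-(2 * m) : ℝ) : ℂ) * ω₁ + ((1 - 2 * n : ℝ) : ℂ) * ω₃ = 0 := by
    push_cast; linear_combination h
  have h1 := (indep hind _ _ this).2
  have : (2 * n : ℝ) = 1 := by linarith
  have : (2 * n : ℤ) = 1 := by exact_mod_cast this
  omega

lemma w13_not_lat (hind : LinearIndependent ℝ ![ω₁, ω₃]) : ω₁ - ω₃ ∉ lattice ω₁ ω₃ := by
  rintro ⟨m, n, h⟩
  have : ((1 - 2 * m : ℝ) : ℂ) * ω₁ + ((-1 - 2 * n : ℝ) : ℂ) * ω₃ = 0 := by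
    push_cast; linear_combination h
  have h1 := (indep hind _ _ this).1
  have : (2 * m : ℝ) = 1 := by linarith
  have : (2 * m : ℤ) = 1 := by exact_mod_cast this
  omega

/-- A doubly periodic function, holomorphic away from the lattice, with a limit at 0,
is constant. -/
theorem liou {φ : ℂ → ℂ} {c : ℂ}
    (hδ₀ : ∃ δ > 0, ∀ z ∈ lattice ω₁ ω₃, ‖z‖ < δ → z = 0)
    (hclosed : IsClosed (lattice ω₁ ω₃))
    (hcover : ∃ K : Set ℂ, IsCompact K ∧ ∀ z : ℂ, ∃ l ∈ lattice ω₁ ω₃, z - l ∈ K)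
    (hd : DifferentiableOn ℂ φ (lattice ω₁ ω₃)ᶜ)
    (hp1 : ∀ z ∈ (lattice ω₁ ω₃)ᶜ, φ (z + 2 * ω₁) = φ z)
    (hp3 : ∀ z ∈ (lattice ω₁ ω₃)ᶜ, φ (z + 2 * ω₃) = φ z)
    (hlim : Tendsto φ (𝓝[≠] (0:ℂ)) (𝓝 c)) :
    ∀ z ∈ (lattice ω₁ ω₃)ᶜ, φ z = c := by
  classical
  obtain ⟨δ₀, hδ₀pos, hδ₀⟩ := hδ₀
  set Λ := lattice ω₁ ω₃ with hΛ
  set Φ : ℂ → ℂ := fun z => if z ∈ Λ then c else φ z with hΦdef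
  have Φeq : ∀ z ∉ Λ, Φ z = φ z := fun z hz => if_neg hz
  have Φmem : ∀ z ∈ Λ, Φ z = c := fun z hz => if_pos hz
  set S : AddSubgroup ℂ :=
    { carrier := {t | ∀ z, Φ (z + t) = Φ z}
      zero_mem' := by intro z; simp
      add_mem' := by
        intro a b ha hb z
        calc Φ (z + (a + b)) = Φ (z + a + b) := by rw [add_assoc]
        _ = Φ (z + a) := hb (z + a)
        _ = Φ z := ha z
      neg_mem' := by
        intro a ha z
        have := ha (z + -a)
        rw [add_assoc, neg_add_cancel, add_zero] at this
        exact this.symm } with hS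
  have gen : ∀ w : ℂ, 2 * w ∈ Λ → (∀ z ∈ Λᶜ, φ (z + 2 * w) = φ z) → (2 * w) ∈ S := by
    intro w hwΛ hper z
    by_cases hz : z ∈ Λ
    · have : z + 2 * w ∈ Λ := lat_add hz hwΛ
      rw [Φmem _ this, Φmem _ hz]
    · have hz2 : z + 2 * w ∉ Λ := by
        intro hmem
        have h2 : z + 2 * w + -(2 * w) ∈ Λ := lat_add hmem (lat_neg hwΛ)
        rw [add_neg_cancel_right] at h2
        exact hz h2
      rw [Φeq _ hz2, Φeq _ hz]
      exact hper z hz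
  have gen1 : (2 * ω₁) ∈ S := gen ω₁ lat_w1 hp1
  have gen3 : (2 * ω₃) ∈ S := gen ω₃ lat_w3 hp3
  have per_all : ∀ l ∈ Λ, ∀ z, Φ (z + l) = Φ z := by
    rintro l ⟨m, n, rfl⟩ z
    have hmem : 2 * (m:ℂ) * ω₁ + 2 * (n:ℂ) * ω₃ ∈ S := by
      have heq : 2 * (m:ℂ) * ω₁ + 2 * (n:ℂ) * ω₃ = m • (2 * ω₁) + n • (2 * ω₃) := by
        simp [zsmul_eq_mul]; ring
      rw [heq]
      exact S.add_mem (S.zsmul_mem gen1 m) (S.zsmul_mem gen3 n)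
    exact hmem z
  have per_sub : ∀ l ∈ Λ, ∀ z, Φ (z - l) = Φ z := by
    intro l hl z
    rw [sub_eq_add_neg]
    exact per_all (-l) (lat_neg hl) z
  have punct : ∀ l ∈ Λ, ∀ y : ℂ, y ≠ l → ‖y - l‖ < δ₀ → y ∉ Λ := by
    intro l hl y hyne hylt hy
    have : y - l ∈ Λ := lat_add hy (lat_neg hl)
    have := hδ₀ _ this hylt
    exact hyne (sub_eq_zero.mp this)
  have tend0 : Tendsto Φ (𝓝[≠] (0:ℂ)) (𝓝 c) := by
    apply hlim.congr'
    have hball : ∀ᶠ y in 𝓝 (0:ℂ), y ∈ ball (0:ℂ) δ₀ :=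
      isOpen_ball.eventually_mem (mem_ball_self hδ₀pos)
    filter_upwards [hball.filter_mono nhdsWithin_le_nhds, self_mem_nhdsWithin] with y hy hy0
    refine (Φeq y ?_).symm
    exact punct 0 lat_zero y hy0 (by simpa [mem_ball, dist_eq_norm] using hy)
  have tendl : ∀ l ∈ Λ, Tendsto Φ (𝓝[≠] l) (𝓝 c) := by
    intro l hl
    have ht : Tendsto (fun z => z - l) (𝓝[≠] l) (𝓝[≠] (0:ℂ)) := by
      apply tendsto_nhdsWithin_of_tendsto_nhds_of_eventually_within
      · have h1 : Tendsto (fun z : ℂ => z - l) (𝓝 l) (𝓝 (0:ℂ)) := by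
          simpa using (continuous_sub_right l).tendsto l
        exact h1.mono_left nhdsWithin_le_nhds
      · filter_upwards [self_mem_nhdsWithin] with y hy
        simpa [sub_eq_zero] using hy
    have := tend0.comp ht
    exact this.congr (fun z => per_sub l hl z)
  have hΦdiff : Differentiable ℂ Φ := by
    intro z
    by_cases hz : z ∈ Λ
    · have hcev : ∀ᶠ w in 𝓝 c, ‖w‖ ≤ ‖c‖ + 1 := by
        filter_upwards [isOpen_ball.eventually_mem (mem_ball_self one_pos)] with w hw
        have h1 : dist w c < 1 := by simpa [mem_ball] using hw
        calc ‖w‖ ≤ ‖c‖ + dist w c := by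
              rw [dist_eq_norm]; exact (norm_le_norm_add_norm_sub' w c)
        _ ≤ ‖c‖ + 1 := by linarith
      have hev : ∀ᶠ y in 𝓝[≠] z, ‖Φ y‖ ≤ ‖c‖ + 1 :=
        (tendl z hz).eventually hcev
      rw [eventually_nhdsWithin_iff] at hev
      obtain ⟨ε, hεpos, hε⟩ := Metric.eventually_nhds_iff.mp hev
      set ε' := min ε δ₀ with hε'
      have hε'pos : 0 < ε' := lt_min hεpos hδ₀pos
      have hsub : ball z ε' \ {z} ⊆ Λᶜ := by
        rintro y ⟨hy1, hy2⟩
        refine punct z hz y (by simpa using hy2) ?_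
        have : dist y z < ε' := by simpa [mem_ball] using hy1
        exact lt_of_lt_of_le (by rwa [dist_eq_norm] at this) (min_le_right _ _)
      have hdball : DifferentiableOn ℂ Φ (ball z ε' \ {z}) := by
        apply (hd.mono hsub).congr
        intro y hy
        exact Φeq y (hsub hy)
      have hbdd : BddAbove (norm ∘ Φ '' (ball z ε' \ {z})) := by
        refine ⟨‖c‖ + 1, ?_⟩
        rintro _ ⟨y, hy, rfl⟩
        have hd0 : dist y z < ε' := by simpa [mem_ball] using hy.1
        have hd1 : dist y z < ε := lt_of_lt_of_le hd0 (min_le_left _ _)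
        exact hε hd1 (by simpa using hy.2)
      have happ := Complex.differentiableOn_update_limUnder_of_bddAbove
        (isOpen_ball.mem_nhds (mem_ball_self hε'pos)) hdball hbdd
      rw [(tendl z hz).limUnder_eq] at happ
      have hupd : Function.update Φ z c = Φ := by
        apply Function.update_eq_self_iff.mpr
        exact (Φmem z hz).symm
      rw [hupd] at happ
      exact happ.differentiableAt (isOpen_ball.mem_nhds (mem_ball_self hε'pos))
    · have hmem : Λᶜ ∈ 𝓝 z := hclosed.isOpen_compl.mem_nhds hz
      have heq : Φ =ᶠ[𝓝 z] φ := by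
        filter_upwards [hmem] with y hy
        exact Φeq y hy
      exact (hd.differentiableAt hmem).congr_of_eventuallyEq heq
  obtain ⟨K, hKc, hcov⟩ := hcover
  have hrange : range Φ ⊆ Φ '' K := by
    rintro _ ⟨z, rfl⟩
    obtain ⟨l, hl, hzl⟩ := hcov z
    exact ⟨z - l, hzl, per_sub l hl z⟩
  have hbdd : Bornology.IsBounded (range Φ) :=
    ((hKc.image hΦdiff.continuous).isBounded).subset hrange
  intro z hz
  have := hΦdiff.apply_eq_apply_of_bounded hbdd z 0
  rw [Φeq z hz] at this
  rw [this, Φmem 0 lat_zero]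

/-- If `o` is holomorphic on a punctured ball at 0 and `o z - 2/z → 0`, then
`o² + 2o'` has a limit at 0. -/
theorem qlim {o : ℂ → ℂ} {δ : ℝ} (hδ : 0 < δ)
    (hdo : DifferentiableOn ℂ o (ball (0:ℂ) δ \ {0}))
    (hlim : Tendsto (fun z => o z - 2 * z⁻¹) (𝓝[≠] (0:ℂ)) (𝓝 0)) :
    ∃ K : ℂ, Tendsto (fun z => (o z)^2 + 2 * deriv o z) (𝓝[≠] (0:ℂ)) (𝓝 K) := by
  set ψ : ℂ → ℂ := fun z => o z - 2 * z⁻¹ with hψdef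
  have hev : ∀ᶠ y in 𝓝[≠] (0:ℂ), ‖ψ y‖ ≤ 1 := by
    have : ∀ᶠ w : ℂ in 𝓝 0, ‖w‖ ≤ 1 := by
      filter_upwards [isOpen_ball.eventually_mem (mem_ball_self one_pos)] with w hw
      exact le_of_lt (by simpa [mem_ball, dist_eq_norm] using hw)
    exact hlim.eventually this
  rw [eventually_nhdsWithin_iff] at hev
  obtain ⟨ε, hεpos, hε⟩ := Metric.eventually_nhds_iff.mp hev
  set r := min ε δ with hr
  have hrpos : 0 < r := lt_min hεpos hδ
  have hsub : ball (0:ℂ) r \ {0} ⊆ ball (0:ℂ) δ \ {0} :=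
    diff_subset_diff_left (ball_subset_ball (min_le_right _ _))
  have hdψ : DifferentiableOn ℂ ψ (ball (0:ℂ) r \ {0}) := by
    apply DifferentiableOn.sub (hdo.mono hsub)
    intro z hz
    exact ((differentiableAt_inv hz.2).const_mul 2).differentiableWithinAt
  have hbdd : BddAbove (norm ∘ ψ '' (ball (0:ℂ) r \ {0})) := by
    refine ⟨1, ?_⟩
    rintro _ ⟨y, hy, rfl⟩
    have h0 : dist y 0 < r := by simpa [mem_ball] using hy.1
    have h1 : dist y 0 < ε := lt_of_lt_of_le h0 (min_le_left _ _)
    exact hε h1 (by simpa using hy.2)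
  have happ := Complex.differentiableOn_update_limUnder_of_bddAbove
    (isOpen_ball.mem_nhds (mem_ball_self hrpos)) hdψ hbdd
  rw [hlim.limUnder_eq] at happ
  set h : ℂ → ℂ := Function.update ψ 0 0 with hhdef
  have hh0 : h 0 = 0 := Function.update_self 0 0 ψ
  have hoeq : ∀ z ∈ ball (0:ℂ) r \ {0}, o z = 2 * z⁻¹ + h z := by
    intro z hz
    rw [hhdef, Function.update_of_ne (by simpa using hz.2)]
    simp [hψdef]
  have hdh : DifferentiableOn ℂ h (ball (0:ℂ) r) := happ
  have hopen : IsOpen (ball (0:ℂ) r \ {0}) := isOpen_ball.sdiff isClosed_singleton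
  have hder : ∀ z ∈ ball (0:ℂ) r \ {0}, deriv o z = -2 * (z^2)⁻¹ + deriv h z := by
    intro z hz
    have heq : o =ᶠ[𝓝 z] fun w => 2 * w⁻¹ + h w := by
      filter_upwards [hopen.mem_nhds hz] with y hy
      exact hoeq y hy
    rw [heq.deriv_eq]
    have hd1 : DifferentiableAt ℂ (fun w : ℂ => 2 * w⁻¹) z :=
      (differentiableAt_inv hz.2).const_mul 2
    have hd2 : DifferentiableAt ℂ h z :=
      hdh.differentiableAt (isOpen_ball.mem_nhds hz.1)
    rw [deriv_fun_add hd1 hd2, deriv_const_mul 2 (differentiableAt_inv hz.2), deriv_inv]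
    ring
  have hana := hdh.analyticOnNhd isOpen_ball
  have hcd : ContinuousAt (deriv h) 0 :=
    (hana.deriv.continuousOn).continuousAt (isOpen_ball.mem_nhds (mem_ball_self hrpos))
  have hda : DifferentiableAt ℂ h 0 := hdh.differentiableAt
    (isOpen_ball.mem_nhds (mem_ball_self hrpos))
  have hslope : Tendsto (fun z : ℂ => z⁻¹ * h z) (𝓝[≠] (0:ℂ)) (𝓝 (deriv h 0)) := by
    have := hasDerivAt_iff_tendsto_slope.mp hda.hasDerivAt
    apply this.congr
    intro z
    simp [slope_def_field, hh0]
    ring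
  refine ⟨6 * deriv h 0, ?_⟩
  have hqev : ∀ᶠ z in 𝓝[≠] (0:ℂ),
      (o z)^2 + 2 * deriv o z = 4 * (z⁻¹ * h z) + (h z)^2 + 2 * deriv h z := by
    have hball : ∀ᶠ z in 𝓝[≠] (0:ℂ), z ∈ ball (0:ℂ) r :=
      eventually_nhdsWithin_of_eventually_nhds
        (isOpen_ball.eventually_mem (mem_ball_self hrpos))
    filter_upwards [hball, self_mem_nhdsWithin] with z hz hz0
    have hzm : z ∈ ball (0:ℂ) r \ {0} := ⟨hz, by simpa using hz0⟩
    rw [hoeq z hzm, hder z hzm]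
    have : (z^2)⁻¹ = z⁻¹ * z⁻¹ := by rw [sq, mul_inv]
    rw [this]
    ring
  apply Tendsto.congr' (EventuallyEq.symm hqev)
  have ht1 : Tendsto (fun z : ℂ => 4 * (z⁻¹ * h z)) (𝓝[≠] (0:ℂ)) (𝓝 (4 * deriv h 0)) :=
    hslope.const_mul 4
  have hch : ContinuousAt h 0 := hda.continuousAt
  have ht2 : Tendsto (fun z : ℂ => (h z)^2) (𝓝[≠] (0:ℂ)) (𝓝 0) := by
    have h1 : Tendsto h (𝓝[≠] (0:ℂ)) (𝓝 (h 0)) :=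
      hch.tendsto.mono_left nhdsWithin_le_nhds
    rw [hh0] at h1
    simpa using h1.pow 2
  have ht3 : Tendsto (fun z : ℂ => 2 * deriv h z) (𝓝[≠] (0:ℂ)) (𝓝 (2 * deriv h 0)) :=
    (hcd.tendsto.mono_left nhdsWithin_le_nhds).const_mul 2
  have := (ht1.add ht2).add ht3
  convert this using 2
  ring

set_option maxHeartbeats 1000000 in
/-- Two local solutions of the Riccati equation `o' = (K - o²)/2` vanishing at two points
agree along real segments from those points. -/
theorem ode_eq {o : ℂ → ℂ} {U : Set ℂ} (hU : IsOpen U) (hd : DifferentiableOn ℂ o U)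
    {K : ℂ} (hq : ∀ z ∈ U, deriv o z = (K - (o z)^2) / 2)
    {p₁ p₃ : ℂ} (h1 : o p₁ = 0) (h3 : o p₃ = 0)
    {τ : ℝ} (hτ : 0 < τ)
    (hmem : ∀ t : ℝ, t ∈ Ioo (-τ) τ → p₁ + (t:ℂ) ∈ U ∧ p₃ + (t:ℂ) ∈ U) :
    ∀ t : ℝ, t ∈ Ioo (-τ) τ → o (p₁ + (t:ℂ)) = o (p₃ + (t:ℂ)) := by
  have h0mem : (0:ℝ) ∈ Ioo (-τ) τ := by constructor <;> simpa using hτ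
  have hshift : ∀ p : ℂ, (∀ t : ℝ, t ∈ Ioo (-τ) τ → p + (t:ℂ) ∈ U) →
      ∀ t ∈ Ioo (-τ) τ, HasDerivAt (fun s : ℝ => o (p + (s:ℂ)))
        ((K - (o (p + (t:ℂ)))^2) / 2) t := by
    intro p hp t ht
    have hu : HasDerivAt (fun s : ℝ => p + (s:ℂ)) 1 t := by
      have h1 : HasDerivAt (fun s : ℝ => (s:ℂ)) 1 t := by
        exact Complex.ofRealCLM.hasDerivAt (x := t)
      simpa using h1.const_add p
    have ho : HasDerivAt o (deriv o (p + (t:ℂ))) (p + (t:ℂ)) :=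
      (hd.differentiableAt (hU.mem_nhds (hp t ht))).hasDerivAt
    have hcomp := (ho.hasFDerivAt.restrictScalars ℝ).comp_hasDerivAt t hu
    have : HasDerivAt (fun s : ℝ => o (p + (s:ℂ))) (deriv o (p + (t:ℂ))) t := by
      exact (by simpa using hcomp :
        HasDerivAt (o ∘ fun s : ℝ => p + (s:ℂ)) (deriv o (p + (t:ℂ))) t)
    rwa [hq _ (hp t ht)] at this
  have hmem1 : ∀ t : ℝ, t ∈ Ioo (-τ) τ → p₁ + (t:ℂ) ∈ U := fun t ht => (hmem t ht).1
  have hmem3 : ∀ t : ℝ, t ∈ Ioo (-τ) τ → p₃ + (t:ℂ) ∈ U := fun t ht => (hmem t ht).2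
  set Sf : ℝ → ℂ := fun t => (o (p₁ + (t:ℂ)) + o (p₃ + (t:ℂ))) / 2 with hSf
  set D : ℝ → ℂ := fun t => o (p₁ + (t:ℂ)) - o (p₃ + (t:ℂ)) with hD
  have hSfc : ContinuousOn Sf (Ioo (-τ) τ) := by
    have hoc : ContinuousOn o U := hd.continuousOn
    have c1 : ContinuousOn (fun t : ℝ => o (p₁ + (t:ℂ))) (Ioo (-τ) τ) :=
      hoc.comp (Continuous.continuousOn (by continuity)) hmem1
    have c3 : ContinuousOn (fun t : ℝ => o (p₃ + (t:ℂ))) (Ioo (-τ) τ) :=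
      hoc.comp (Continuous.continuousOn (by continuity)) hmem3
    exact (c1.add c3).div_const 2
  set A : ℝ → ℂ := fun t => ∫ s in (0:ℝ)..t, Sf s with hA
  have hAd : ∀ t ∈ Ioo (-τ) τ, HasDerivAt A (Sf t) t := by
    intro t ht
    apply intervalIntegral.integral_hasDerivAt_right
    · apply ContinuousOn.intervalIntegrable
      apply hSfc.mono
      exact Set.ordConnected_Ioo.uIcc_subset h0mem ht
    · exact ContinuousOn.stronglyMeasurableAtFilter isOpen_Ioo hSfc t ht
    · exact hSfc.continuousAt (isOpen_Ioo.mem_nhds ht)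
  set W : ℝ → ℂ := fun t => D t * Complex.exp (A t) with hW
  have hWd : ∀ t ∈ Ioo (-τ) τ, HasDerivAt W 0 t := by
    intro t ht
    have hg1 := hshift p₁ hmem1 t ht
    have hg3 := hshift p₃ hmem3 t ht
    have hDd : HasDerivAt D (Sf t * (-(D t))) t := by
      have := hg1.sub hg3
      refine this.congr_deriv ?_
      simp only [hSf, hD]
      ring
    have hEd : HasDerivAt (fun t => Complex.exp (A t)) (Complex.exp (A t) * Sf t) t :=
      (hAd t ht).cexp
    have := hDd.mul hEd
    refine this.congr_deriv ?_
    ring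
  have hWc : ∀ t ∈ Ioo (-τ) τ, W t = W 0 := by
    intro t ht
    have hdiff : DifferentiableOn ℝ W (Ioo (-τ) τ) :=
      fun s hs => ((hWd s hs).differentiableAt).differentiableWithinAt
    have hzero : ∀ s ∈ Ioo (-τ) τ, fderivWithin ℝ W (Ioo (-τ) τ) s = 0 := by
      intro s hs
      rw [fderivWithin_of_isOpen isOpen_Ioo hs]
      have h0 : HasFDerivAt W (ContinuousLinearMap.smulRight (1 : ℝ →L[ℝ] ℝ) (0:ℂ)) s :=
        (hWd s hs).hasFDerivAt
      rw [h0.fderiv]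
      refine ContinuousLinearMap.ext fun v => ?_
      simp only [ContinuousLinearMap.smulRight_apply, smul_zero,
        ContinuousLinearMap.zero_apply]
    exact (convex_Ioo _ _).is_const_of_fderivWithin_eq_zero hdiff hzero ht h0mem
  intro t ht
  have hW0 : W 0 = 0 := by
    simp only [hW, hD, hA]
    simp [h1, h3]
  have := (hWc t ht).trans hW0
  rcases mul_eq_zero.mp this with h | h
  · exact sub_eq_zero.mp h
  · exact absurd h (Complex.exp_ne_zero _)

end AuxW0

/-- no element of `W₀` behaves as `z⁻¹ • 1 + O(z)` (in fact, `z⁻¹ • 1 + O(1)`)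
at the origin: there is no `X ∈ W₀` such that `X(z) - z⁻¹ • 1` tends to a limit as
`z → 0` along `ℂ ∖ Λ`. -/
theorem W0_no_scalar_pole (ω₁ ω₃ : ℂ)
    (hind : LinearIndependent ℝ ![ω₁, ω₃]) :
    ¬ ∃ X ∈ W0 ω₁ ω₃, ∃ L : Matrix (Fin 2) (Fin 2) ℂ,
      Tendsto (fun z : ℂ => X z - z⁻¹ • (1 : Matrix (Fin 2) (Fin 2) ℂ))
        (𝓝[(lattice ω₁ ω₃)ᶜ] 0) (𝓝 L) := by
  classical
  rintro ⟨X, ⟨hXd, hper1, -, hper3⟩, LL, hT⟩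
  obtain ⟨δ₀, hδ₀pos, hδ₀⟩ := AuxW0.lat_discrete hind
  have hcl : IsClosed (lattice ω₁ ω₃) := AuxW0.lat_closed hind
  have hopen : IsOpen (lattice ω₁ ω₃)ᶜ := hcl.isOpen_compl
  have hcover := AuxW0.lat_cover hind
  have hdisc : ∃ δ > 0, ∀ z ∈ lattice ω₁ ω₃, ‖z‖ < δ → z = 0 := ⟨δ₀, hδ₀pos, hδ₀⟩
  have hcs : ∀ {z l : ℂ}, l ∈ lattice ω₁ ω₃ → z ∈ (lattice ω₁ ω₃)ᶜ →
      z + l ∈ (lattice ω₁ ω₃)ᶜ := by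
    intro z l hl hz hmem
    have h2 := AuxW0.lat_add hmem (AuxW0.lat_neg hl)
    rw [add_neg_cancel_right] at h2
    exact hz h2
  have hnegc : ∀ {z : ℂ}, z ∈ (lattice ω₁ ω₃)ᶜ → -z ∈ (lattice ω₁ ω₃)ᶜ := by
    intro z hz hmem
    exact hz (by simpa using AuxW0.lat_neg hmem)
  -- the trace of X
  set f : ℂ → ℂ := fun z => X z 0 0 + X z 1 1 with hfdef
  set c : ℂ := LL 0 0 + LL 1 1 with hcdef
  have hfd : DifferentiableOn ℂ f (lattice ω₁ ω₃)ᶜ := by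
    have h1 : DifferentiableOn ℂ (fun z => (X z : Fin 2 → Fin 2 → ℂ)) (lattice ω₁ ω₃)ᶜ := hXd
    exact (differentiableOn_pi.mp (differentiableOn_pi.mp h1 0) 0).add
      (differentiableOn_pi.mp (differentiableOn_pi.mp h1 1) 1)
  have hfp1 : ∀ z ∈ (lattice ω₁ ω₃)ᶜ, f (z + 2 * ω₁) = f z := by
    intro z hz
    simp only [hfdef]
    rw [hper1 z hz]
    simp [σ1, Matrix.mul_apply, Matrix.vecMul, dotProduct, Fin.sum_univ_two]
    ring
  have hfp3 : ∀ z ∈ (lattice ω₁ ω₃)ᶜ, f (z + 2 * ω₃) = f z := by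
    intro z hz
    simp only [hfdef]
    rw [hper3 z hz]
    simp [σ3, Matrix.mul_apply, Matrix.vecMul, dotProduct, Fin.sum_univ_two]
  -- the trace has a simple pole with residue 2 at 0
  have hEntry : ∀ i : Fin 2,
      Tendsto (fun z : ℂ => X z i i - z⁻¹) (𝓝[(lattice ω₁ ω₃)ᶜ] 0) (𝓝 (LL i i)) := by
    intro i
    have hc : Continuous (fun M : Matrix (Fin 2) (Fin 2) ℂ => M i i) :=
      (continuous_apply i).comp (continuous_apply i)
    have h2 := (hc.tendsto LL).comp hT
    have heq : (fun z : ℂ => (X z - z⁻¹ • (1 : Matrix (Fin 2) (Fin 2) ℂ)) i i)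
        = fun z : ℂ => X z i i - z⁻¹ := by
      funext z
      simp [Matrix.sub_apply, Matrix.smul_apply, Matrix.one_apply]
    exact heq ▸ h2
  have hftendW : Tendsto (fun z : ℂ => f z - 2 * z⁻¹) (𝓝[(lattice ω₁ ω₃)ᶜ] 0) (𝓝 c) := by
    have h2 := (hEntry 0).add (hEntry 1)
    apply h2.congr
    intro z
    simp only [hfdef]
    ring
  have hpb : ∀ y : ℂ, y ∈ Metric.ball (0:ℂ) δ₀ → y ≠ 0 → y ∈ (lattice ω₁ ω₃)ᶜ := by
    intro y hy hy0 hmem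
    exact hy0 (hδ₀ y hmem (by simpa [Metric.mem_ball, dist_eq_norm] using hy))
  have hle : 𝓝[≠] (0:ℂ) ≤ 𝓝[(lattice ω₁ ω₃)ᶜ] (0:ℂ) := by
    rw [nhdsWithin_restrict' ({0}ᶜ : Set ℂ) (Metric.ball_mem_nhds (0:ℂ) hδ₀pos)]
    apply nhdsWithin_mono
    rintro y ⟨hy0, hyb⟩
    exact hpb y hyb (by simpa using hy0)
  have hftend : Tendsto (fun z : ℂ => f z - 2 * z⁻¹) (𝓝[≠] (0:ℂ)) (𝓝 c) :=
    hftendW.mono_left hle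
  -- the even part of f is constant (Liouville)
  have hmapneg : Set.MapsTo (fun z : ℂ => -z) (lattice ω₁ ω₃)ᶜ (lattice ω₁ ω₃)ᶜ :=
    fun z hz => hnegc hz
  set E : ℂ → ℂ := fun z => f z + f (-z) with hEdef
  have hEd : DifferentiableOn ℂ E (lattice ω₁ ω₃)ᶜ :=
    hfd.add (hfd.comp differentiable_neg.differentiableOn hmapneg)
  have hback1 : ∀ z ∈ (lattice ω₁ ω₃)ᶜ, f (z - 2 * ω₁) = f z := by
    intro z hz
    have hz' : z - 2 * ω₁ ∈ (lattice ω₁ ω₃)ᶜ := by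
      have h2 := hcs (AuxW0.lat_neg AuxW0.lat_w1) hz
      simpa [sub_eq_add_neg] using h2
    have h3 := hfp1 _ hz'
    have h4 : z - 2 * ω₁ + 2 * ω₁ = z := by ring
    rw [h4] at h3
    exact h3.symm
  have hback3 : ∀ z ∈ (lattice ω₁ ω₃)ᶜ, f (z - 2 * ω₃) = f z := by
    intro z hz
    have hz' : z - 2 * ω₃ ∈ (lattice ω₁ ω₃)ᶜ := by
      have h2 := hcs (AuxW0.lat_neg AuxW0.lat_w3) hz
      simpa [sub_eq_add_neg] using h2
    have h3 := hfp3 _ hz'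
    have h4 : z - 2 * ω₃ + 2 * ω₃ = z := by ring
    rw [h4] at h3
    exact h3.symm
  have hEp1 : ∀ z ∈ (lattice ω₁ ω₃)ᶜ, E (z + 2 * ω₁) = E z := by
    intro z hz
    simp only [hEdef]
    rw [hfp1 z hz]
    congr 1
    have h2 : -(z + 2 * ω₁) = -z - 2 * ω₁ := by ring
    rw [h2, hback1 _ (hnegc hz)]
  have hEp3 : ∀ z ∈ (lattice ω₁ ω₃)ᶜ, E (z + 2 * ω₃) = E z := by
    intro z hz
    simp only [hEdef]
    rw [hfp3 z hz]
    congr 1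
    have h2 : -(z + 2 * ω₃) = -z - 2 * ω₃ := by ring
    rw [h2, hback3 _ (hnegc hz)]
  have hnegtend : Tendsto (fun z : ℂ => -z) (𝓝[≠] (0:ℂ)) (𝓝[≠] (0:ℂ)) := by
    apply tendsto_nhdsWithin_of_tendsto_nhds_of_eventually_within
    · exact (continuous_neg.tendsto' 0 0 (by simp)).mono_left nhdsWithin_le_nhds
    · filter_upwards [self_mem_nhdsWithin] with y hy
      simpa using hy
  have hEtend : Tendsto E (𝓝[≠] (0:ℂ)) (𝓝 (c + c)) := by
    have h2 := hftend.add (hftend.comp hnegtend)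
    apply h2.congr
    intro z
    simp only [hEdef, Function.comp]
    rw [inv_neg]
    ring
  have hEconst : ∀ z ∈ (lattice ω₁ ω₃)ᶜ, E z = c + c :=
    AuxW0.liou hdisc hcl hcover hEd hEp1 hEp3 hEtend
  -- the odd part o of f
  set o : ℂ → ℂ := fun z => f z - c with hodef
  have hod : DifferentiableOn ℂ o (lattice ω₁ ω₃)ᶜ := hfd.sub (differentiableOn_const c)
  have hop1 : ∀ z ∈ (lattice ω₁ ω₃)ᶜ, o (z + 2 * ω₁) = o z := by
    intro z hz; simp only [hodef]; rw [hfp1 z hz]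
  have hop3 : ∀ z ∈ (lattice ω₁ ω₃)ᶜ, o (z + 2 * ω₃) = o z := by
    intro z hz; simp only [hodef]; rw [hfp3 z hz]
  have hodd : ∀ z ∈ (lattice ω₁ ω₃)ᶜ, o (-z) = -o z := by
    intro z hz
    have h2 := hEconst z hz
    simp only [hEdef] at h2
    simp only [hodef]
    linear_combination h2
  have hotend : Tendsto (fun z : ℂ => o z - 2 * z⁻¹) (𝓝[≠] (0:ℂ)) (𝓝 0) := by
    have h2 := hftend.sub_const c
    rw [sub_self] at h2
    apply h2.congr
    intro z
    simp only [hodef]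
    ring
  -- the Riccati equation for o
  have hdo : DifferentiableOn ℂ o (Metric.ball (0:ℂ) δ₀ \ {0}) :=
    hod.mono (fun y hy => hpb y hy.1 (by simpa using hy.2))
  obtain ⟨K, hqtend⟩ := AuxW0.qlim hδ₀pos hdo hotend
  set q : ℂ → ℂ := fun z => (o z)^2 + 2 * deriv o z with hqdef
  have hoana := hod.analyticOnNhd hopen
  have hderod : DifferentiableOn ℂ (deriv o) (lattice ω₁ ω₃)ᶜ :=
    hoana.deriv.differentiableOn
  have hqd : DifferentiableOn ℂ q (lattice ω₁ ω₃)ᶜ :=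
    (hod.pow 2).add (hderod.const_mul 2)
  have hderper : ∀ w : ℂ, (∀ z ∈ (lattice ω₁ ω₃)ᶜ, o (z + w) = o z) →
      ∀ z ∈ (lattice ω₁ ω₃)ᶜ, deriv o (z + w) = deriv o z := by
    intro w hper z hz
    have heq : (fun y => o (y + w)) =ᶠ[𝓝 z] o := by
      filter_upwards [hopen.mem_nhds hz] with y hy
      exact hper y hy
    calc deriv o (z + w) = deriv (fun y => o (y + w)) z := (deriv_comp_add_const o w z).symm
    _ = deriv o z := heq.deriv_eq
  have hqp1 : ∀ z ∈ (lattice ω₁ ω₃)ᶜ, q (z + 2 * ω₁) = q z := by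
    intro z hz
    simp only [hqdef]
    rw [hop1 z hz, hderper (2 * ω₁) hop1 z hz]
  have hqp3 : ∀ z ∈ (lattice ω₁ ω₃)ᶜ, q (z + 2 * ω₃) = q z := by
    intro z hz
    simp only [hqdef]
    rw [hop3 z hz, hderper (2 * ω₃) hop3 z hz]
  have hqconst : ∀ z ∈ (lattice ω₁ ω₃)ᶜ, q z = K :=
    AuxW0.liou hdisc hcl hcover hqd hqp1 hqp3 hqtend
  have hderiv_eq : ∀ z ∈ (lattice ω₁ ω₃)ᶜ, deriv o z = (K - (o z)^2) / 2 := by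
    intro z hz
    have h2 := hqconst z hz
    simp only [hqdef] at h2
    linear_combination h2 / 2
  -- o vanishes at the half-periods ω₁ and ω₃
  have hw1c : ω₁ ∈ (lattice ω₁ ω₃)ᶜ := AuxW0.w1_not_lat hind
  have hw3c : ω₃ ∈ (lattice ω₁ ω₃)ᶜ := AuxW0.w3_not_lat hind
  have hzero : ∀ w : ℂ, w ∈ (lattice ω₁ ω₃)ᶜ →
      (∀ z ∈ (lattice ω₁ ω₃)ᶜ, o (z + 2 * w) = o z) → o w = 0 := by
    intro w hw hper
    have hnw : -w ∈ (lattice ω₁ ω₃)ᶜ := hnegc hw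
    have h1 : o (-w + 2 * w) = o (-w) := hper _ hnw
    have h2 : -w + 2 * w = w := by ring
    rw [h2, hodd w hw] at h1
    have h3 : o w + o w = 0 := by linear_combination h1
    exact add_self_eq_zero.mp h3
  have ho1 : o ω₁ = 0 := hzero ω₁ hw1c hop1
  have ho3 : o ω₃ = 0 := hzero ω₃ hw3c hop3
  -- equality of the two shifted solutions on a real segment
  obtain ⟨ε₁, hε₁pos, hε₁⟩ := Metric.isOpen_iff.mp hopen ω₁ hw1c
  obtain ⟨ε₃, hε₃pos, hε₃⟩ := Metric.isOpen_iff.mp hopen ω₃ hw3c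
  set τ := min ε₁ ε₃ with hτdef
  have hτpos : 0 < τ := lt_min hε₁pos hε₃pos
  have hmemseg : ∀ t : ℝ, t ∈ Set.Ioo (-τ) τ →
      ω₁ + (t:ℂ) ∈ (lattice ω₁ ω₃)ᶜ ∧ ω₃ + (t:ℂ) ∈ (lattice ω₁ ω₃)ᶜ := by
    intro t ht
    have habs : |t| < τ := abs_lt.mpr ⟨ht.1, ht.2⟩
    have hn : ‖(t:ℂ)‖ < τ := by
      rw [Complex.norm_real, Real.norm_eq_abs]; exact habs
    constructor
    · apply hε₁
      rw [Metric.mem_ball, dist_eq_norm]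
      have h2 : ω₁ + (t:ℂ) - ω₁ = (t:ℂ) := by ring
      rw [h2]
      exact lt_of_lt_of_le hn (min_le_left _ _)
    · apply hε₃
      rw [Metric.mem_ball, dist_eq_norm]
      have h2 : ω₃ + (t:ℂ) - ω₃ = (t:ℂ) := by ring
      rw [h2]
      exact lt_of_lt_of_le hn (min_le_right _ _)
  have hodeeq := AuxW0.ode_eq hopen hod hderiv_eq ho1 ho3 hτpos hmemseg
  -- identity theorem: o(ω₁ + z) = o(ω₃ + z) globally
  set Uset : Set ℂ := {z | ω₁ + z ∈ (lattice ω₁ ω₃)ᶜ ∧ ω₃ + z ∈ (lattice ω₁ ω₃)ᶜ}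
    with hUdef
  have hUopen : IsOpen Uset := by
    have h1 : Uset = (fun z => ω₁ + z) ⁻¹' (lattice ω₁ ω₃)ᶜ ∩
        (fun z => ω₃ + z) ⁻¹' (lattice ω₁ ω₃)ᶜ := rfl
    rw [h1]
    exact (hopen.preimage (continuous_const.add continuous_id)).inter
      (hopen.preimage (continuous_const.add continuous_id))
  have hUccnt : (Usetᶜ).Countable := by
    have hsub : Usetᶜ ⊆ ((fun l : ℂ => l - ω₁) '' lattice ω₁ ω₃) ∪
        ((fun l : ℂ => l - ω₃) '' lattice ω₁ ω₃) := by
      intro z hz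
      rw [Set.mem_compl_iff, hUdef, Set.mem_setOf_eq, not_and_or] at hz
      rcases hz with h | h
      · left
        refine ⟨ω₁ + z, ?_, by ring⟩
        by_contra hmem
        exact h hmem
      · right
        refine ⟨ω₃ + z, ?_, by ring⟩
        by_contra hmem
        exact h hmem
    exact ((AuxW0.lat_countable.image _).union (AuxW0.lat_countable.image _)).mono hsub
  have hUconn : IsPreconnected Uset := by
    have hpc : IsPathConnected (Usetᶜ)ᶜ :=
      Set.Countable.isPathConnected_compl_of_one_lt_rank
        (by rw [Complex.rank_real_complex]; norm_num) hUccnt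
    rw [compl_compl] at hpc
    exact hpc.isConnected.isPreconnected
  set F₁ : ℂ → ℂ := fun z => o (ω₁ + z) with hF1
  set F₃ : ℂ → ℂ := fun z => o (ω₃ + z) with hF3
  have hF1d : DifferentiableOn ℂ F₁ Uset :=
    hod.comp ((differentiable_id.const_add ω₁).differentiableOn) (fun z hz => hz.1)
  have hF3d : DifferentiableOn ℂ F₃ Uset :=
    hod.comp ((differentiable_id.const_add ω₃).differentiableOn) (fun z hz => hz.2)
  have h0U' : (0:ℂ) ∈ Uset := by
    simp only [hUdef, Set.mem_setOf_eq]
    constructor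
    · simpa using hw1c
    · simpa using hw3c
  -- frequent equality along a real sequence
  have hseq : ∀ ρ : ℝ, 0 < ρ →
      Tendsto (fun n : ℕ => ((ρ / (n+1) : ℝ) : ℂ)) atTop (𝓝[≠] (0:ℂ)) := by
    intro ρ hρ
    apply tendsto_nhdsWithin_of_tendsto_nhds_of_eventually_within
    · have hr : Tendsto (fun n : ℕ => (ρ / (n+1) : ℝ)) atTop (𝓝 0) :=
        tendsto_const_nhds.div_atTop
          (tendsto_atTop_add_const_right _ 1 tendsto_natCast_atTop_atTop)
      have h5 := (Complex.continuous_ofReal.tendsto 0).comp hr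
      rw [Complex.ofReal_zero] at h5
      exact h5
    · apply Filter.Eventually.of_forall
      intro n
      have : (0:ℝ) < ρ / (n+1) := by positivity
      simp only [Set.mem_compl_iff, Set.mem_singleton_iff]
      exact_mod_cast ne_of_gt this
  have hfreq : ∃ᶠ z in 𝓝[≠] (0:ℂ), F₁ z = F₃ z := by
    apply (hseq (τ/2) (by positivity)).frequently
    apply Filter.Frequently.of_forall
    intro n
    have htpos : (0:ℝ) < τ/2/(n+1) := by positivity
    have htlt : τ/2/(n+1) < τ := by
      have h2 : τ/2/(n+1) ≤ τ/2 := by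
        apply div_le_self (le_of_lt (by positivity))
        have : (0:ℝ) ≤ (n:ℝ) := Nat.cast_nonneg n
        linarith
      linarith [half_lt_self hτpos]
    have htmem : (τ/2/(n+1) : ℝ) ∈ Set.Ioo (-τ) τ :=
      ⟨lt_trans (neg_lt_zero.mpr hτpos) htpos, htlt⟩
    exact hodeeq _ htmem
  have heqU : Set.EqOn F₁ F₃ Uset :=
    (hF1d.analyticOnNhd hUopen).eqOn_of_preconnected_of_frequently_eq
      (hF3d.analyticOnNhd hUopen) hUconn h0U' hfreq
  -- blow-up contradiction at ω₁ - ω₃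
  have hw13 : ω₁ - ω₃ ∈ (lattice ω₁ ω₃)ᶜ := AuxW0.w13_not_lat hind
  obtain ⟨δ₁, hδ₁pos, hδ₁⟩ := Metric.isOpen_iff.mp hopen (ω₁ - ω₃) hw13
  have hminpos : 0 < min δ₀ δ₁ := lt_min hδ₀pos hδ₁pos
  set ρ := min δ₀ δ₁ / 2 with hρdef
  have hρpos : 0 < ρ := by positivity
  set w : ℕ → ℂ := fun n => ((ρ / (n+1) : ℝ) : ℂ) with hwdef
  have hwpos : ∀ n : ℕ, (0:ℝ) < ρ / (n+1) := fun n => by positivity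
  have hwne : ∀ n, w n ≠ 0 := by
    intro n
    simp only [hwdef]
    exact_mod_cast ne_of_gt (hwpos n)
  have hwnorm : ∀ n, ‖w n‖ = ρ / (n+1) := by
    intro n
    simp only [hwdef]
    rw [Complex.norm_real, Real.norm_eq_abs, abs_of_pos (hwpos n)]
  have hwlt : ∀ n : ℕ, ρ / (n+1) < min δ₀ δ₁ := by
    intro n
    have h2 : ρ / (n+1) ≤ ρ := by
      apply div_le_self (le_of_lt hρpos)
      have : (0:ℝ) ≤ (n:ℝ) := Nat.cast_nonneg n
      linarith
    have h3 : ρ < min δ₀ δ₁ := half_lt_self hminpos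
    linarith
  have hwball : ∀ n, w n ∈ Metric.ball (0:ℂ) δ₀ := by
    intro n
    rw [Metric.mem_ball, dist_zero_right, hwnorm n]
    exact lt_of_lt_of_le (hwlt n) (min_le_left _ _)
  have hwΛ : ∀ n, w n ∈ (lattice ω₁ ω₃)ᶜ := fun n => hpb _ (hwball n) (hwne n)
  have hw13n : ∀ n, (ω₁ - ω₃) + w n ∈ (lattice ω₁ ω₃)ᶜ := by
    intro n
    apply hδ₁
    rw [Metric.mem_ball, dist_eq_norm]
    have h2 : ω₁ - ω₃ + w n - (ω₁ - ω₃) = w n := by ring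
    rw [h2, hwnorm n]
    exact lt_of_lt_of_le (hwlt n) (min_le_right _ _)
  have hUmem : ∀ n, w n - ω₃ ∈ Uset := by
    intro n
    refine ⟨?_, ?_⟩
    · have h2 : ω₁ + (w n - ω₃) = (ω₁ - ω₃) + w n := by ring
      rw [h2]
      exact hw13n n
    · have h2 : ω₃ + (w n - ω₃) = w n := by ring
      rw [h2]
      exact hwΛ n
  have hkey : ∀ n, o ((ω₁ - ω₃) + w n) = o (w n) := by
    intro n
    have h2 := heqU (hUmem n)
    simp only [hF1, hF3] at h2
    rw [show ω₁ + (w n - ω₃) = (ω₁ - ω₃) + w n by ring,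
      show ω₃ + (w n - ω₃) = w n by ring] at h2
    exact h2
  have hwtendp : Tendsto w atTop (𝓝[≠] (0:ℂ)) := hseq ρ hρpos
  have hwtend0 : Tendsto w atTop (𝓝 (0:ℂ)) := hwtendp.mono_right nhdsWithin_le_nhds
  have hLHS : Tendsto (fun n => o ((ω₁ - ω₃) + w n)) atTop (𝓝 (o (ω₁ - ω₃))) := by
    have hco : ContinuousAt o (ω₁ - ω₃) :=
      (hod.differentiableAt (hopen.mem_nhds hw13)).continuousAt
    apply hco.tendsto.comp
    have h2 : Tendsto (fun n => (ω₁ - ω₃) + w n) atTop (𝓝 ((ω₁ - ω₃) + 0)) :=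
      tendsto_const_nhds.add hwtend0
    simpa using h2
  have hRHSconv : Tendsto (fun n => o (w n)) atTop (𝓝 (o (ω₁ - ω₃))) := by
    apply hLHS.congr
    intro n
    exact hkey n
  -- but ‖o (w n)‖ → ∞
  have hbnd1 : ∀ᶠ y : ℂ in 𝓝 0, ‖y‖ ≤ 1 := by
    filter_upwards [Metric.isOpen_ball.eventually_mem (Metric.mem_ball_self one_pos)] with y hy
    exact le_of_lt (by simpa [Metric.mem_ball, dist_eq_norm] using hy)
  have hψev : ∀ᶠ z in 𝓝[≠] (0:ℂ), ‖o z - 2 * z⁻¹‖ ≤ 1 := hotend.eventually hbnd1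
  have hψn : ∀ᶠ n : ℕ in atTop, ‖o (w n) - 2 * (w n)⁻¹‖ ≤ 1 := hwtendp.eventually hψev
  have hlower : ∀ᶠ n : ℕ in atTop, 2 / ρ * ((n:ℝ)+1) - 1 ≤ ‖o (w n)‖ := by
    filter_upwards [hψn] with n hn
    have h1 : ‖(2:ℂ) * (w n)⁻¹‖ ≤ ‖o (w n)‖ + ‖o (w n) - 2 * (w n)⁻¹‖ := by
      have h2 := norm_sub_le (o (w n)) (o (w n) - 2 * (w n)⁻¹)
      rw [sub_sub_cancel] at h2
      exact h2
    have h3 : ‖(2:ℂ) * (w n)⁻¹‖ = 2 / ρ * ((n:ℝ)+1) := by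
      rw [norm_mul, norm_inv, hwnorm n]
      have h4 : ‖(2:ℂ)‖ = 2 := by norm_num
      rw [h4]
      field_simp
    rw [h3] at h1
    linarith
  have hRHSdiv : Tendsto (fun n => ‖o (w n)‖) atTop atTop := by
    apply tendsto_atTop_mono' atTop hlower
    have h1 : Tendsto (fun n : ℕ => ((n:ℝ)+1)) atTop atTop :=
      tendsto_atTop_add_const_right _ 1 tendsto_natCast_atTop_atTop
    have h2 : Tendsto (fun n : ℕ => 2 / ρ * ((n:ℝ)+1)) atTop atTop :=
      h1.const_mul_atTop (by positivity)
    exact tendsto_atTop_add_const_right _ (-1) h2 |>.congr (fun n => by ring)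
  exact not_tendsto_atTop_of_tendsto_nhds hRHSconv.norm hRHSdiv
end
end

section
/- If χ ∈ W₀ and det χ(z) → 1 as z → 0 along ℂ ∖ Λ, then det χ(z) = 1 for all z ∈ ℂ ∖ Λ. (This is the argument of Section 5 showing that the factor χ(t,z) produced by the Grassmannian flows has unit determinant, hence lies in G_out.) -/
noncomputable section

open Filter Topology

attribute [local instance] Matrix.normedAddCommGroup Matrix.normedSpace

/-- if `χ ∈ W₀` and `det χ(z) → 1` as `z → 0` along `ℂ ∖ Λ`, then
`det χ(z) = 1` identically on `ℂ ∖ Λ`. -/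
theorem W0_det_eq_one (ω₁ ω₃ : ℂ)
    (hind : LinearIndependent ℝ ![ω₁, ω₃])
    (χ : ℂ → Matrix (Fin 2) (Fin 2) ℂ) (hχ : χ ∈ W0 ω₁ ω₃)
    (hdet : Tendsto (fun z => (χ z).det) (𝓝[(lattice ω₁ ω₃)ᶜ] 0) (𝓝 1)) :
    ∀ z ∈ (lattice ω₁ ω₃)ᶜ, (χ z).det = 1 := by
  classical
  obtain ⟨hdiff, hper1, hper2, hper3⟩ := hχ
  set Λ : Set ℂ := lattice ω₁ ω₃ with hΛdef
  set f : ℂ → ℂ := fun z => (χ z).det with hfdef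
  -- basis of ℂ over ℝ from 2ω₁, 2ω₃
  have hind2 : LinearIndependent ℝ ![2*ω₁, 2*ω₃] := by
    have h2 : (![2*ω₁, 2*ω₃] : Fin 2 → ℂ) = (LinearMap.lsmul ℝ ℂ (2:ℝ)) ∘ ![ω₁, ω₃] := by
      funext i; fin_cases i <;> simp [Complex.real_smul]
    rw [h2]
    exact hind.map' _ (LinearMap.ker_eq_bot.2 (smul_right_injective ℂ two_ne_zero))
  let b : Module.Basis (Fin 2) ℝ ℂ := basisOfLinearIndependentOfCardEqFinrank hind2
    (by simp [Complex.finrank_real_complex])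
  have hb0 : b 0 = 2*ω₁ := by simp [b, coe_basisOfLinearIndependentOfCardEqFinrank]
  have hb1 : b 1 = 2*ω₃ := by simp [b, coe_basisOfLinearIndependentOfCardEqFinrank]
  set S : Set ℂ := ((Submodule.span ℤ (Set.range ⇑b) : Submodule ℤ ℂ) : Set ℂ) with hS
  have hrange : Set.range ⇑b = {2*ω₁, 2*ω₃} := by
    rw [show ⇑b = ![2*ω₁,2*ω₃] from funext fun i => by fin_cases i <;> simp [hb0, hb1]]
    simp [Matrix.range_cons, Matrix.range_empty, Set.pair_comm]
  have hmem : ∀ z : ℂ, z ∈ S ↔ ∃ m n : ℤ, z = 2*(m:ℂ)*ω₁ + 2*(n:ℂ)*ω₃ := by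
    intro z
    rw [hS, SetLike.mem_coe, hrange, Submodule.mem_span_pair]
    constructor
    · rintro ⟨m, n, h⟩; exact ⟨m, n, by rw [← h]; push_cast [zsmul_eq_mul]; ring⟩
    · rintro ⟨m, n, rfl⟩; exact ⟨m, n, by push_cast [zsmul_eq_mul]; ring⟩
  have hΛS : Λ = S := by
    ext z; rw [hmem]; exact Iff.rfl
  -- discreteness: key filter lemma
  have hdisc : DiscreteTopology (Submodule.span ℤ (Set.range ⇑b)) := inferInstance
  have hkey : ∀ p ∈ Λ, 𝓝[≠] p ≤ 𝓝[Λᶜ] p := by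
    rw [hΛS]
    intro p hp
    have hbot : 𝓝[S \ {p}] p = ⊥ := by
      have h1 := (discreteTopology_subtype_iff.mp hdisc) p hp
      refine le_bot_iff.mp ?_
      calc 𝓝[S \ {p}] p ≤ 𝓝[≠] p ⊓ 𝓟 S := by
            rw [nhdsWithin, nhdsWithin, Set.diff_eq, Set.inter_comm, ← Filter.inf_principal,
              ← inf_assoc]
        _ = ⊥ := h1
    calc 𝓝[≠] p ≤ 𝓝[(S \ {p}) ∪ Sᶜ] p := by
          apply nhdsWithin_mono
          intro z hz
          by_cases h : z ∈ S
          · exact Or.inl ⟨h, hz⟩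
          · exact Or.inr h
      _ = 𝓝[S \ {p}] p ⊔ 𝓝[Sᶜ] p := nhdsWithin_union _ _ _
      _ = 𝓝[Sᶜ] p := by rw [hbot, bot_sup_eq]
  have hclosed : IsClosed Λ := by
    rw [hΛS]
    exact AddSubgroup.isClosed_of_discrete
      (H := (Submodule.span ℤ (Set.range ⇑b)).toAddSubgroup)
  have hopen : IsOpen Λᶜ := hclosed.isOpen_compl
  -- lattice membership facts
  have h0Λ : (0:ℂ) ∈ Λ := ⟨0, 0, by simp⟩
  have hΛadd : ∀ a ∈ Λ, ∀ z : ℂ, z + a ∈ Λ ↔ z ∈ Λ := by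
    rw [hΛS]
    intro a ha z
    constructor
    · intro h
      have := Submodule.sub_mem _ h ha
      rw [hS]; simpa using this
    · intro h
      exact Submodule.add_mem _ h ha
  have hω1Λ : (2*ω₁ : ℂ) ∈ Λ := ⟨1, 0, by push_cast; ring⟩
  have hω3Λ : (2*ω₃ : ℂ) ∈ Λ := ⟨0, 1, by push_cast; ring⟩
  -- f is differentiable on Λᶜ
  have hfdiff : DifferentiableOn ℂ f Λᶜ := by
    have he : ∀ i j : Fin 2, DifferentiableOn ℂ (fun z => χ z i j) Λᶜ := by
      intro i j
      have hL : Differentiable ℂ (Matrix.entryLinearMap ℂ ℂ i j :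
          Matrix (Fin 2) (Fin 2) ℂ → ℂ) :=
        (Matrix.entryLinearMap ℂ ℂ i j).toContinuousLinearMap.differentiable
      exact hL.comp_differentiableOn hdiff
    have : f = fun z => χ z 0 0 * χ z 1 1 - χ z 0 1 * χ z 1 0 := by
      funext z; exact Matrix.det_fin_two _
    rw [this]
    exact ((he 0 0).mul (he 1 1)).sub ((he 0 1).mul (he 1 0))
  -- single-step periodicity of f
  have hf1 : ∀ z ∉ Λ, f (z + 2*ω₁) = f z := by
    intro z hz
    show (χ (z + 2*ω₁)).det = (χ z).det
    rw [hper1 z hz, Matrix.det_mul, Matrix.det_mul]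
    simp [σ1, Matrix.det_fin_two_of]
  have hf3 : ∀ z ∉ Λ, f (z + 2*ω₃) = f z := by
    intro z hz
    show (χ (z + 2*ω₃)).det = (χ z).det
    rw [hper3 z hz, Matrix.det_mul, Matrix.det_mul]
    simp [σ3, Matrix.det_fin_two_of]
  -- the extension F
  set F : ℂ → ℂ := fun z => if z ∈ Λ then 1 else f z with hFdef
  have hFeq : ∀ z ∉ Λ, F z = f z := fun z hz => if_neg hz
  have hFΛ : ∀ z ∈ Λ, F z = 1 := fun z hz => if_pos hz
  have hF1 : ∀ z : ℂ, F (z + 2*ω₁) = F z := by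
    intro z
    by_cases hz : z ∈ Λ
    · rw [hFΛ _ hz, hFΛ _ ((hΛadd _ hω1Λ z).mpr hz)]
    · rw [hFeq _ hz, hFeq _ (fun h => hz ((hΛadd _ hω1Λ z).mp h)), hf1 z hz]
  have hF3 : ∀ z : ℂ, F (z + 2*ω₃) = F z := by
    intro z
    by_cases hz : z ∈ Λ
    · rw [hFΛ _ hz, hFΛ _ ((hΛadd _ hω3Λ z).mpr hz)]
    · rw [hFeq _ hz, hFeq _ (fun h => hz ((hΛadd _ hω3Λ z).mp h)), hf3 z hz]
  -- full periodicity of F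
  have hFper : ∀ p ∈ Λ, ∀ z : ℂ, F (z + p) = F z := by
    have hG : ∀ p ∈ AddSubgroup.closure ({2*ω₁, 2*ω₃} : Set ℂ), ∀ z : ℂ, F (z + p) = F z := by
      intro p hp
      induction hp using AddSubgroup.closure_induction with
      | mem q hq =>
        rcases hq with rfl | rfl
        · exact hF1
        · exact hF3
      | zero => simp
      | add a c _ _ iha ihc =>
        intro z
        rw [show z + (a + c) = (z + a) + c by ring, ihc, iha]
      | neg a _ iha =>
        intro z
        have := iha (z + -a)
        rw [show z + -a + a = z by ring] at this
        exact this.symm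
    intro p hp z
    refine hG p ?_ z
    rcases hp with ⟨m, n, rfl⟩
    have h1 : (2*ω₁ : ℂ) ∈ AddSubgroup.closure ({2*ω₁, 2*ω₃} : Set ℂ) :=
      AddSubgroup.subset_closure (Set.mem_insert _ _)
    have h3 : (2*ω₃ : ℂ) ∈ AddSubgroup.closure ({2*ω₁, 2*ω₃} : Set ℂ) :=
      AddSubgroup.subset_closure (Set.mem_insert_of_mem _ rfl)
    have := AddSubgroup.add_mem _ (AddSubgroup.zsmul_mem _ h1 m) (AddSubgroup.zsmul_mem _ h3 n)
    rw [show (m • (2*ω₁ : ℂ) + n • (2*ω₃ : ℂ)) = 2*(m:ℂ)*ω₁ + 2*(n:ℂ)*ω₃ by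
      push_cast [zsmul_eq_mul]; ring] at this
    exact this
  -- limits
  have htend0 : Tendsto f (𝓝[≠] (0:ℂ)) (𝓝 1) := hdet.mono_left (hkey 0 h0Λ)
  have hΛc_mem : ∀ p ∈ Λ, Λᶜ ∈ 𝓝[≠] p := fun p hp => hkey p hp self_mem_nhdsWithin
  have htendF0 : Tendsto F (𝓝[≠] (0:ℂ)) (𝓝 1) := by
    refine htend0.congr' ?_
    filter_upwards [hΛc_mem 0 h0Λ] with z hz
    exact (hFeq z hz).symm
  have htendF : ∀ p ∈ Λ, Tendsto F (𝓝[≠] p) (𝓝 1) := by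
    intro p hp
    have hsub : Tendsto (fun z => z - p) (𝓝[≠] p) (𝓝[≠] (0:ℂ)) := by
      rw [tendsto_nhdsWithin_iff]
      constructor
      · have : Tendsto (fun z : ℂ => z - p) (𝓝 p) (𝓝 (p - p)) :=
          (continuous_id.sub continuous_const).tendsto p
        rw [sub_self] at this
        exact this.mono_left nhdsWithin_le_nhds
      · filter_upwards [self_mem_nhdsWithin] with z hz
        exact sub_ne_zero.2 hz
    have := htendF0.comp hsub
    refine this.congr fun z => ?_
    show F (z - p) = F z
    rw [← hFper p hp (z - p), sub_add_cancel]
  -- F is entire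
  have hFdAt : ∀ z ∉ Λ, DifferentiableAt ℂ F z := by
    intro z hz
    have hfz : DifferentiableAt ℂ f z := hfdiff.differentiableAt (hopen.mem_nhds hz)
    refine hfz.congr_of_eventuallyEq ?_
    filter_upwards [hopen.mem_nhds hz] with w hw
    exact hFeq w hw
  have hFdiff : Differentiable ℂ F := by
    intro z
    by_cases hz : z ∈ Λ
    · have hev : ∀ᶠ w in 𝓝[≠] z, DifferentiableAt ℂ F w := by
        filter_upwards [hΛc_mem z hz] with w hw
        exact hFdAt w hw
      have hcont : ContinuousAt F z := by
        have h1 : Tendsto F (𝓝 z) (𝓝 1) := by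
          rw [← nhdsNE_sup_pure z, Filter.tendsto_sup]
          refine ⟨htendF z hz, Filter.tendsto_pure_left.mpr fun s hs => ?_⟩
          rw [hFΛ z hz]
          exact mem_of_mem_nhds hs
        rwa [ContinuousAt, hFΛ z hz]
      exact (Complex.analyticAt_of_differentiable_on_punctured_nhds_of_continuousAt
        hev hcont).differentiableAt
    · exact hFdAt z hz
  -- boundedness of F
  have hKbdd : Bornology.IsBounded (ZSpan.fundamentalDomain b) :=
    ZSpan.fundamentalDomain_isBounded b
  set K : Set ℂ := closure (ZSpan.fundamentalDomain b) with hK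
  have hKcpt : IsCompact K :=
    Metric.isCompact_of_isClosed_isBounded isClosed_closure hKbdd.closure
  have hrangesub : Set.range F ⊆ F '' K := by
    rintro _ ⟨z, rfl⟩
    have hfr : ZSpan.fract b z ∈ ZSpan.fundamentalDomain b :=
      ZSpan.fract_mem_fundamentalDomain b z
    have hfloor : ((ZSpan.floor b z : ℂ)) ∈ Λ := by
      rw [hΛS]; exact (ZSpan.floor b z).2
    have : F z = F (ZSpan.fract b z) := by
      rw [← hFper _ hfloor (ZSpan.fract b z)]
      congr 1
      rw [ZSpan.fract_apply]; ring
    rw [this]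
    exact ⟨_, subset_closure hfr, rfl⟩
  have hbdd : Bornology.IsBounded (Set.range F) := by
    have : IsCompact (F '' K) := hKcpt.image hFdiff.continuous
    exact this.isBounded.subset hrangesub
  -- Liouville
  have hconst : ∀ z : ℂ, F z = F 0 := fun z =>
    hFdiff.apply_eq_apply_of_bounded hbdd z 0
  intro z hz
  have := hconst z
  rw [hFeq z hz, hFΛ 0 h0Λ] at this
  exact this
end
end
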